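/- arXiv:1511.08937 — 5 statements merged into one kernel-verified Lean document; each statement's English description precedes it below -/
import Mathlib

section
/- Let A be a *-algebra over a field containing ℚ[i] and V an A-*-bimodule. Since w_n ∘ b = (-1)^n b ∘ w_{n-1}, the Hochschild cochain complex splits into the ±1-eigenspace subcomplexes of the (suitably sign-adjusted) involution, and consequently HH^•(A,V) ≅ HH^•_+(A,V) ⊕ HH^•_−(A,V). -/
/- STATEMENT 2: Let A be a *-algebra over a field containing ℚ[i] and V an A-*-bimodule.
Since w_n ∘ b = (-1)^n b ∘ w_{n-1}, the Hochschild cochain complex splits into the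
±1-eigenspace subcomplexes of the (suitably sign-adjusted) involution, and consequently
HH^•(A,V) ≅ HH^•₊(A,V) ⊕ HH^•₋(A,V). -/

open MulOpposite

section

variable (A V : Type*)
variable [Ring A] [StarRing A]
variable [AddCommGroup V] [Module A V] [Module Aᵐᵒᵖ V] [StarAddMonoid V]

/-- Hochschild cochains of degree `m` with values in the bimodule `V`. -/
abbrev Cochain (m : ℕ) : Type _ := (Fin m → A) → V

variable {A V}

/-- The Hochschild coface maps. -/
noncomputable def hochFace (m : ℕ) (i : ℕ) (φ : Cochain A V m) : Cochain A V (m + 1) :=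
  fun a =>
    if i = 0 then a 0 • φ (fun j => a j.succ)
    else if i = m + 1 then op (a (Fin.last m)) • φ (fun j => a j.castSucc)
    else φ (fun j =>
      if (j : ℕ) + 1 < i then a j.castSucc
      else if (j : ℕ) + 1 = i then a j.castSucc * a j.succ
      else a j.succ)

/-- The Hochschild coboundary `b`. -/
noncomputable def hochB (m : ℕ) (φ : Cochain A V m) : Cochain A V (m + 1) :=
  fun a => ∑ i ∈ Finset.range (m + 2), ((-1 : ℤ) ^ i) • hochFace m i φ a

set_option linter.unusedSectionVars false

lemma hochFace_add (m i : ℕ) (φ ψ : Cochain A V m) :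
    hochFace m i (φ + ψ) = hochFace m i φ + hochFace m i ψ := by
  funext a
  simp only [hochFace, Pi.add_apply]
  split_ifs <;> simp [smul_add]

lemma hochB_add (m : ℕ) (φ ψ : Cochain A V m) :
    hochB m (φ + ψ) = hochB m φ + hochB m ψ := by
  funext a
  simp only [hochB, hochFace_add, Pi.add_apply, smul_add, Finset.sum_add_distrib]

variable (A V)

/-- The Hochschild coboundary as an additive map. -/
noncomputable def bHom (m : ℕ) : Cochain A V m →+ Cochain A V (m + 1) :=
  AddMonoidHom.mk' (hochB m) (hochB_add m)

variable {A V}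

/-- The involution `(w_n φ)(a_1,...,a_n) = φ(a_n*, ..., a_1*)*`. -/
noncomputable def hochW (n : ℕ) (φ : Cochain A V n) : Cochain A V n :=
  fun a => star (φ (fun j => star (a (Fin.rev j))))

/-- The sign-adjusted involution `W_n = (-1)^{n(n+1)/2} w_n`, which commutes with `b`. -/
noncomputable def hochWadj (n : ℕ) (φ : Cochain A V n) : Cochain A V n :=
  ((-1 : ℤ) ^ (n * (n + 1) / 2)) • hochW n φ

lemma hochWadj_add (n : ℕ) (φ ψ : Cochain A V n) :
    hochWadj n (φ + ψ) = hochWadj n φ + hochWadj n ψ := by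
  funext a
  simp [hochWadj, hochW, smul_add]

variable (A V)

/-- The sign-adjusted involution as an additive map. -/
noncomputable def WHom (n : ℕ) : Cochain A V n →+ Cochain A V n :=
  AddMonoidHom.mk' (hochWadj n) (hochWadj_add n)

/-- Cocycles. -/
noncomputable def Zgrp (n : ℕ) : AddSubgroup (Cochain A V n) := (bHom A V n).ker

/-- Coboundaries (`⊥` in degree `0`). -/
noncomputable def Bgrp : ∀ n : ℕ, AddSubgroup (Cochain A V n)
  | 0 => ⊥
  | m + 1 => (bHom A V m).range

/-- The `+1`-eigenspace of the sign-adjusted involution. -/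
noncomputable def Pgrp (n : ℕ) : AddSubgroup (Cochain A V n) :=
  (WHom A V n - AddMonoidHom.id _).ker

/-- The `-1`-eigenspace of the sign-adjusted involution. -/
noncomputable def Mgrp (n : ℕ) : AddSubgroup (Cochain A V n) :=
  (WHom A V n + AddMonoidHom.id _).ker

/-- Hochschild cohomology `HH^n(A, V)`. -/
abbrev HH (n : ℕ) : Type _ :=
  ↥(Zgrp A V n) ⧸ ((Bgrp A V n).addSubgroupOf (Zgrp A V n))

/-- Coboundaries coming from the `+1`-eigenspace subcomplex. -/
noncomputable def BgrpP : ∀ n : ℕ, AddSubgroup (Cochain A V n)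
  | 0 => ⊥
  | m + 1 => (Pgrp A V m).map (bHom A V m)

/-- Coboundaries coming from the `-1`-eigenspace subcomplex. -/
noncomputable def BgrpM : ∀ n : ℕ, AddSubgroup (Cochain A V n)
  | 0 => ⊥
  | m + 1 => (Mgrp A V m).map (bHom A V m)

/-- The cohomology `HH^n₊(A,V)` of the `+1`-eigenspace subcomplex. -/
abbrev HHplus (n : ℕ) : Type _ :=
  ↥(Zgrp A V n ⊓ Pgrp A V n) ⧸ ((BgrpP A V n).addSubgroupOf (Zgrp A V n ⊓ Pgrp A V n))

/-- The cohomology `HH^n₋(A,V)` of the `-1`-eigenspace subcomplex. -/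
abbrev HHminus (n : ℕ) : Type _ :=
  ↥(Zgrp A V n ⊓ Mgrp A V n) ⧸ ((BgrpM A V n).addSubgroupOf (Zgrp A V n ⊓ Mgrp A V n))

end


section Aux

open Finset

variable {A V : Type*}
variable [Ring A] [StarRing A]
variable [AddCommGroup V] [Module A V] [Module Aᵐᵒᵖ V] [StarAddMonoid V]

set_option linter.unusedSectionVars false

@[simp] lemma bHom_apply (m : ℕ) (φ : Cochain A V m) : bHom A V m φ = hochB m φ := rfl

@[simp] lemma WHom_apply (n : ℕ) (φ : Cochain A V n) : WHom A V n φ = hochWadj n φ := rfl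

lemma hochFace_zsmul (m i : ℕ) (c : ℤ) (φ : Cochain A V m) :
    hochFace m i (c • φ) = c • hochFace m i φ := by
  funext a
  simp only [hochFace, Pi.smul_apply]
  split_ifs <;> first | rfl | exact smul_comm _ _ _

lemma hochB_zsmul (m : ℕ) (c : ℤ) (φ : Cochain A V m) :
    hochB m (c • φ) = c • hochB m φ := by
  funext a
  simp only [hochB, hochFace_zsmul, Pi.smul_apply, Finset.smul_sum]
  exact Finset.sum_congr rfl fun i _ => smul_comm _ _ _

lemma hochFace_ksmul {k : Type*} [Field k] [Module k V]
    [SMulCommClass A k V] [SMulCommClass Aᵐᵒᵖ k V]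
    (m i : ℕ) (c : k) (φ : Cochain A V m) :
    hochFace m i (c • φ) = c • hochFace m i φ := by
  funext a
  simp only [hochFace, Pi.smul_apply]
  split_ifs <;> first | rfl | exact smul_comm _ _ _

lemma hochB_ksmul {k : Type*} [Field k] [Module k V]
    [SMulCommClass A k V] [SMulCommClass Aᵐᵒᵖ k V]
    (m : ℕ) (c : k) (φ : Cochain A V m) :
    hochB m (c • φ) = c • hochB m φ := by
  funext a
  simp only [hochB, hochFace_ksmul, Pi.smul_apply, Finset.smul_sum]
  exact Finset.sum_congr rfl fun i _ => smul_comm _ _ _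

lemma hochW_zsmul (n : ℕ) (c : ℤ) (φ : Cochain A V n) :
    hochW n (c • φ) = c • hochW n φ := by
  funext a
  simp [hochW, star_zsmul]

lemma hochW_invol (n : ℕ) (φ : Cochain A V n) : hochW n (hochW n φ) = φ := by
  funext a
  simp only [hochW, star_star]
  congr 1
  funext j
  exact congrArg a (Fin.rev_rev j)

lemma hochWadj_invol (n : ℕ) (φ : Cochain A V n) : hochWadj n (hochWadj n φ) = φ := by
  simp only [hochWadj, hochW_zsmul, hochW_invol, smul_smul, ← pow_add]
  rw [Even.neg_one_pow ⟨n * (n + 1) / 2, by ring⟩, one_smul]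

lemma hochFace_zero_apply (m : ℕ) (φ : Cochain A V m) (a : Fin (m + 1) → A) :
    hochFace m 0 φ a = a 0 • φ (fun j => a j.succ) := by
  simp [hochFace]

lemma hochFace_top_apply (m : ℕ) (φ : Cochain A V m) (a : Fin (m + 1) → A) :
    hochFace m (m + 1) φ a = op (a (Fin.last m)) • φ (fun j => a j.castSucc) := by
  simp [hochFace]

lemma hochFace_mid_apply (m i : ℕ) (h1 : i ≠ 0) (h2 : i ≠ m + 1)
    (φ : Cochain A V m) (a : Fin (m + 1) → A) :
    hochFace m i φ a = φ (fun j =>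
      if (j : ℕ) + 1 < i then a j.castSucc
      else if (j : ℕ) + 1 = i then a j.castSucc * a j.succ
      else a j.succ) := by
  simp [hochFace, h1, h2]

lemma star_hochFace
    (hL : ∀ (a : A) (v : V), star (a • v) = op (star a) • star v)
    (hR : ∀ (a : A) (v : V), star (op a • v) = star a • star v)
    (m i : ℕ) (hi : i ≤ m + 1) (φ : Cochain A V m) (a : Fin (m + 1) → A) :
    star (hochFace m i φ (fun j => star (a j.rev))) =
      hochFace m (m + 1 - i) (hochW m φ) a := by
  rcases Nat.eq_zero_or_pos i with h0 | hpos
  · subst h0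
    have e1 : hochFace m 0 φ (fun j => star (a j.rev)) =
        star (a (Fin.rev (0 : Fin (m + 1)))) •
          φ (fun j => star (a (Fin.rev (Fin.succ j)))) := by
      simp [hochFace]
    have e2 : hochFace m (m + 1 - 0) (hochW m φ) a =
        op (a (Fin.last m)) • star (φ (fun j => star (a (Fin.castSucc (Fin.rev j))))) := by
      simp [hochFace, hochW]
    rw [e1, e2, hL, star_star]
    have e3 : Fin.rev (0 : Fin (m + 1)) = Fin.last m := by
      ext; simp [Fin.val_rev]
    have e4 : (fun j : Fin m => star (a (Fin.rev (Fin.succ j)))) =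
        fun j => star (a (Fin.castSucc (Fin.rev j))) := by
      funext j
      congr 1
      apply congrArg a
      ext
      simp [Fin.val_rev]
    rw [e3, e4]
  rcases Nat.eq_or_lt_of_le hi with htop | hmid
  · subst htop
    have e1 : hochFace m (m + 1) φ (fun j => star (a j.rev)) =
        op (star (a (Fin.rev (Fin.last m)))) •
          φ (fun j => star (a (Fin.rev (Fin.castSucc j)))) := by
      simp [hochFace]
    have e2 : hochFace m (m + 1 - (m + 1)) (hochW m φ) a =
        a 0 • star (φ (fun j => star (a (Fin.succ (Fin.rev j))))) := by
      simp [hochFace, hochW]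
    rw [e1, e2, hR, star_star]
    have e3 : Fin.rev (Fin.last m) = (0 : Fin (m + 1)) := by
      ext; simp [Fin.val_rev]
    have e4 : (fun j : Fin m => star (a (Fin.rev (Fin.castSucc j)))) =
        fun j => star (a (Fin.succ (Fin.rev j))) := by
      funext j
      have hj : (j : ℕ) < m := j.isLt
      congr 1
      apply congrArg a
      ext
      simp only [Fin.val_rev, Fin.val_succ, Fin.coe_castSucc]
      omega
    rw [e3, e4]
  · have h1 : i ≠ 0 := hpos.ne'
    have h2 : i ≠ m + 1 := by omega
    have h3 : m + 1 - i ≠ 0 := by omega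
    have h4 : m + 1 - i ≠ m + 1 := by omega
    have e1 : hochFace m i φ (fun j => star (a j.rev)) =
        φ (fun j =>
          if (j : ℕ) + 1 < i then star (a (Fin.rev (Fin.castSucc j)))
          else if (j : ℕ) + 1 = i then
            star (a (Fin.rev (Fin.castSucc j))) * star (a (Fin.rev (Fin.succ j)))
          else star (a (Fin.rev (Fin.succ j)))) := by
      simp [hochFace, h1, h2]
    have e2 : hochFace m (m + 1 - i) (hochW m φ) a =
        star (φ (fun j => star (
          if ((Fin.rev j : Fin m) : ℕ) + 1 < m + 1 - i then a (Fin.castSucc (Fin.rev j))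
          else if ((Fin.rev j : Fin m) : ℕ) + 1 = m + 1 - i then
            a (Fin.castSucc (Fin.rev j)) * a (Fin.succ (Fin.rev j))
          else a (Fin.succ (Fin.rev j))))) := by
      simp [hochFace, h3, h4, hochW]
    rw [e1, e2]
    refine congrArg star (congrArg φ (funext fun j => ?_))
    have hj : (j : ℕ) < m := j.isLt
    have hrev : ((Fin.rev j : Fin m) : ℕ) = m - ((j : ℕ) + 1) := Fin.val_rev j
    have ha1 : a (Fin.rev (Fin.castSucc j)) = a (Fin.succ (Fin.rev j)) := by
      apply congrArg a; ext; simp only [Fin.val_rev, Fin.val_succ, Fin.coe_castSucc]; omega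
    have ha2 : a (Fin.rev (Fin.succ j)) = a (Fin.castSucc (Fin.rev j)) := by
      apply congrArg a; ext; simp only [Fin.val_rev, Fin.val_succ, Fin.coe_castSucc]; omega
    by_cases hc1 : (j : ℕ) + 1 < i
    · rw [if_pos hc1,
        if_neg (show ¬((Fin.rev j : Fin m) : ℕ) + 1 < m + 1 - i by omega),
        if_neg (show ¬((Fin.rev j : Fin m) : ℕ) + 1 = m + 1 - i by omega), ha1]
    · by_cases hc2 : (j : ℕ) + 1 = i
      · rw [if_neg hc1, if_pos hc2,
          if_neg (show ¬((Fin.rev j : Fin m) : ℕ) + 1 < m + 1 - i by omega),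
          if_pos (show ((Fin.rev j : Fin m) : ℕ) + 1 = m + 1 - i by omega),
          star_mul, ha1, ha2]
      · rw [if_neg hc1, if_neg hc2,
          if_pos (show ((Fin.rev j : Fin m) : ℕ) + 1 < m + 1 - i by omega), ha2]

lemma tri_succ (m : ℕ) : (m + 1) * (m + 2) / 2 = m * (m + 1) / 2 + (m + 1) := by
  have h : (m + 1) * (m + 2) = m * (m + 1) + (m + 1) * 2 := by ring
  rw [h, Nat.add_mul_div_right _ _ (by norm_num : (0:ℕ) < 2)]

lemma hochW_hochB
    (hL : ∀ (a : A) (v : V), star (a • v) = op (star a) • star v)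
    (hR : ∀ (a : A) (v : V), star (op a • v) = star a • star v)
    (m : ℕ) (φ : Cochain A V m) :
    hochW (m + 1) (hochB m φ) = ((-1 : ℤ) ^ (m + 1)) • hochB m (hochW m φ) := by
  funext a
  show star (∑ i ∈ Finset.range (m + 2),
        ((-1 : ℤ) ^ i) • hochFace m i φ (fun j => star (a j.rev)))
      = ((-1 : ℤ) ^ (m + 1)) •
        ∑ i ∈ Finset.range (m + 2), ((-1 : ℤ) ^ i) • hochFace m i (hochW m φ) a
  rw [star_sum, Finset.smul_sum]
  calc
    ∑ i ∈ Finset.range (m + 2), star (((-1 : ℤ) ^ i) • hochFace m i φ (fun j => star (a j.rev)))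
        = ∑ i ∈ Finset.range (m + 2),
            ((-1 : ℤ) ^ i) • hochFace m (m + 1 - i) (hochW m φ) a := by
          refine Finset.sum_congr rfl fun i hi => ?_
          have hi' : i ≤ m + 1 := by
            have := Finset.mem_range.mp hi; omega
          rw [star_zsmul, star_hochFace hL hR m i hi' φ a]
    _ = ∑ i ∈ Finset.range (m + 2),
            ((-1 : ℤ) ^ (m + 1)) • ((-1 : ℤ) ^ i) • hochFace m i (hochW m φ) a := by
          refine Finset.sum_nbij' (fun i => m + 1 - i) (fun i => m + 1 - i)
            (fun i hi => ?_) (fun i hi => ?_) (fun i hi => ?_) (fun i hi => ?_)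
            (fun i hi => ?_)
          · have := Finset.mem_range.mp hi
            show m + 1 - i ∈ Finset.range (m + 2)
            exact Finset.mem_range.mpr (by omega)
          · have := Finset.mem_range.mp hi
            show m + 1 - i ∈ Finset.range (m + 2)
            exact Finset.mem_range.mpr (by omega)
          · have := Finset.mem_range.mp hi
            show m + 1 - (m + 1 - i) = i
            omega
          · have := Finset.mem_range.mp hi
            show m + 1 - (m + 1 - i) = i
            omega
          · have hi' := Finset.mem_range.mp hi
            rw [smul_smul, ← pow_add]
            have hpar : ((-1 : ℤ)) ^ i = ((-1 : ℤ)) ^ (m + 1 + (m + 1 - i)) := by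
              rw [neg_one_pow_eq_pow_mod_two, neg_one_pow_eq_pow_mod_two (n := m + 1 + (m + 1 - i))]
              congr 1
              omega
            rw [← hpar]
    _ = ((-1 : ℤ) ^ (m + 1)) • ∑ i ∈ Finset.range (m + 2),
            ((-1 : ℤ) ^ i) • hochFace m i (hochW m φ) a := by
          rw [Finset.smul_sum]
  rw [Finset.smul_sum]

lemma wb_comm
    (hL : ∀ (a : A) (v : V), star (a • v) = op (star a) • star v)
    (hR : ∀ (a : A) (v : V), star (op a • v) = star a • star v)
    (m : ℕ) (φ : Cochain A V m) :
    hochWadj (m + 1) (hochB m φ) = hochB m (hochWadj m φ) := by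
  unfold hochWadj
  rw [hochW_hochB hL hR, hochB_zsmul, smul_smul, ← pow_add]
  congr 1
  rw [neg_one_pow_eq_pow_mod_two,
    neg_one_pow_eq_pow_mod_two (n := m * (m + 1) / 2)]
  congr 1
  have h1 : (m + 1) * (m + 1 + 1) / 2 = m * (m + 1) / 2 + (m + 1) := by
    have h : (m + 1) * (m + 1 + 1) = m * (m + 1) + (m + 1) * 2 := by ring
    rw [h, Nat.add_mul_div_right _ _ (by norm_num : (0:ℕ) < 2)]
  omega

lemma hochWadj_sub (n : ℕ) (φ ψ : Cochain A V n) :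
    hochWadj n (φ - ψ) = hochWadj n φ - hochWadj n ψ :=
  map_sub (WHom A V n) φ ψ

lemma mem_Zgrp {n : ℕ} {φ : Cochain A V n} :
    φ ∈ Zgrp A V n ↔ hochB n φ = 0 := by
  rw [Zgrp, AddMonoidHom.mem_ker, bHom_apply]

lemma mem_Pgrp {n : ℕ} {φ : Cochain A V n} :
    φ ∈ Pgrp A V n ↔ hochWadj n φ = φ := by
  rw [Pgrp, AddMonoidHom.mem_ker, AddMonoidHom.sub_apply, AddMonoidHom.id_apply,
    WHom_apply, sub_eq_zero]

lemma mem_Mgrp {n : ℕ} {φ : Cochain A V n} :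
    φ ∈ Mgrp A V n ↔ hochWadj n φ = -φ := by
  rw [Mgrp, AddMonoidHom.mem_ker, AddMonoidHom.add_apply, AddMonoidHom.id_apply,
    WHom_apply, add_eq_zero_iff_eq_neg]

lemma mem_Bgrp_succ {m : ℕ} {φ : Cochain A V (m + 1)} :
    φ ∈ Bgrp A V (m + 1) ↔ ∃ ψ, hochB m ψ = φ := by
  rw [Bgrp, AddMonoidHom.mem_range]
  exact Iff.rfl

lemma mem_BgrpP_succ {m : ℕ} {φ : Cochain A V (m + 1)} :
    φ ∈ BgrpP A V (m + 1) ↔ ∃ ψ ∈ Pgrp A V m, hochB m ψ = φ := by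
  rw [BgrpP, AddSubgroup.mem_map]
  exact Iff.rfl

lemma mem_BgrpM_succ {m : ℕ} {φ : Cochain A V (m + 1)} :
    φ ∈ BgrpM A V (m + 1) ↔ ∃ ψ ∈ Mgrp A V m, hochB m ψ = φ := by
  rw [BgrpM, AddSubgroup.mem_map]
  exact Iff.rfl

/-! ### Halving, depending on a field `k` of characteristic zero -/

noncomputable def halfC (k : Type*) [Field k] [Module k V] {n : ℕ}
    (φ : Cochain A V n) : Cochain A V n := ((2 : k)⁻¹) • φ

lemma halfC_add_halfC (k : Type*) [Field k] [CharZero k] [Module k V] {n : ℕ}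
    (φ : Cochain A V n) : halfC k φ + halfC k φ = φ := by
  show ((2 : k)⁻¹) • φ + ((2 : k)⁻¹) • φ = φ
  rw [← add_smul]
  norm_num

lemma cancel_two (k : Type*) [Field k] [CharZero k] [Module k V] {n : ℕ}
    {x y : Cochain A V n} (h : x + x = y + y) : x = y := by
  apply smul_right_injective (Cochain A V n) (two_ne_zero (α := k))
  show (2 : k) • x = (2 : k) • y
  rw [two_smul, two_smul]
  exact h

lemma halfC_double (k : Type*) [Field k] [CharZero k] [Module k V] {n : ℕ}
    (φ : Cochain A V n) : halfC k (φ + φ) = φ := by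
  show ((2 : k)⁻¹) • (φ + φ) = φ
  rw [smul_add]
  exact halfC_add_halfC k φ

lemma plus_mem (k : Type*) [Field k] [CharZero k] [Module k V] {n : ℕ}
    (φ : Cochain A V n) : halfC k (φ + hochWadj n φ) ∈ Pgrp A V n := by
  rw [mem_Pgrp]
  apply cancel_two k
  rw [← hochWadj_add, halfC_add_halfC, hochWadj_add, hochWadj_invol]
  abel

lemma minus_mem (k : Type*) [Field k] [CharZero k] [Module k V] {n : ℕ}
    (φ : Cochain A V n) : halfC k (φ - hochWadj n φ) ∈ Mgrp A V n := by
  rw [mem_Mgrp]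
  apply cancel_two k
  rw [← hochWadj_add, halfC_add_halfC, hochWadj_sub, hochWadj_invol, ← neg_add,
    halfC_add_halfC, neg_sub]

lemma plus_add_minus (k : Type*) [Field k] [CharZero k] [Module k V] {n : ℕ}
    (φ : Cochain A V n) :
    halfC k (φ + hochWadj n φ) + halfC k (φ - hochWadj n φ) = φ := by
  show ((2 : k)⁻¹) • _ + ((2 : k)⁻¹) • _ = φ
  rw [← smul_add]
  have h : (φ + hochWadj n φ) + (φ - hochWadj n φ) = φ + φ := by abel
  rw [h, smul_add]
  exact halfC_add_halfC k φ

lemma proj_plus_of_mem_P (k : Type*) [Field k] [CharZero k] [Module k V] {n : ℕ}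
    {φ : Cochain A V n} (h : φ ∈ Pgrp A V n) :
    halfC k (φ + hochWadj n φ) = φ := by
  rw [mem_Pgrp] at h
  rw [h]
  exact halfC_double k φ

lemma proj_minus_of_mem_P (k : Type*) [Field k] [CharZero k] [Module k V] {n : ℕ}
    {φ : Cochain A V n} (h : φ ∈ Pgrp A V n) :
    halfC k (φ - hochWadj n φ) = 0 := by
  rw [mem_Pgrp] at h
  rw [h, sub_self]
  exact smul_zero _

lemma proj_plus_of_mem_M (k : Type*) [Field k] [CharZero k] [Module k V] {n : ℕ}
    {φ : Cochain A V n} (h : φ ∈ Mgrp A V n) :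
    halfC k (φ + hochWadj n φ) = 0 := by
  rw [mem_Mgrp] at h
  rw [h]
  rw [show φ + -φ = 0 by abel]
  exact smul_zero _

lemma proj_minus_of_mem_M (k : Type*) [Field k] [CharZero k] [Module k V] {n : ℕ}
    {φ : Cochain A V n} (h : φ ∈ Mgrp A V n) :
    halfC k (φ - hochWadj n φ) = φ := by
  rw [mem_Mgrp] at h
  rw [h, sub_neg_eq_add]
  exact halfC_double k φ

lemma eigen_isCompl (k : Type*) [Field k] [CharZero k] [Module k V] (n : ℕ) :
    IsCompl (Pgrp A V n) (Mgrp A V n) := by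
  constructor
  · rw [AddSubgroup.disjoint_def]
    intro x hp hm
    rw [mem_Pgrp] at hp
    rw [mem_Mgrp] at hm
    have h0 : x + x = 0 := by
      calc x + x = hochWadj n x + x := by rw [hp]
        _ = -x + x := by rw [hm]
        _ = 0 := by abel
    refine cancel_two k (y := 0) ?_
    rw [h0, add_zero]
  · rw [codisjoint_iff_le_sup]
    intro φ _
    exact AddSubgroup.mem_sup.mpr
      ⟨_, plus_mem k φ, _, minus_mem k φ, plus_add_minus k φ⟩

set_option maxHeartbeats 2000000 in
lemma splitting_iso (k : Type*) [Field k] [CharZero k] [Module k V]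
    [SMulCommClass A k V] [SMulCommClass Aᵐᵒᵖ k V]
    (hcomm : ∀ (m : ℕ) (φ : Cochain A V m),
        hochWadj (m + 1) (hochB m φ) = hochB m (hochWadj m φ))
    (n : ℕ) : Nonempty (HH A V n ≃+ HHplus A V n × HHminus A V n) := by
  classical
  -- `W` preserves cocycles
  have hWZ : ∀ {φ : Cochain A V n}, φ ∈ Zgrp A V n → hochWadj n φ ∈ Zgrp A V n := by
    intro φ hφ
    rw [mem_Zgrp] at hφ ⊢
    rw [← hcomm n φ, hφ]
    exact map_zero (WHom A V (n + 1))
  -- cocycles are closed under `k`-scalars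
  have hZsmul : ∀ (c : k) {φ : Cochain A V n}, φ ∈ Zgrp A V n → c • φ ∈ Zgrp A V n := by
    intro c φ hφ
    rw [mem_Zgrp] at hφ ⊢
    rw [hochB_ksmul, hφ, smul_zero]
  have hmemZP : ∀ x : ↥(Zgrp A V n),
      halfC k ((x : Cochain A V n) + hochWadj n ↑x) ∈ Zgrp A V n ⊓ Pgrp A V n := by
    intro x
    refine AddSubgroup.mem_inf.mpr ⟨?_, plus_mem k _⟩
    exact hZsmul _ (AddSubgroup.add_mem _ x.2 (hWZ x.2))
  have hmemZM : ∀ x : ↥(Zgrp A V n),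
      halfC k ((x : Cochain A V n) - hochWadj n ↑x) ∈ Zgrp A V n ⊓ Mgrp A V n := by
    intro x
    refine AddSubgroup.mem_inf.mpr ⟨?_, minus_mem k _⟩
    exact hZsmul _ (AddSubgroup.sub_mem _ x.2 (hWZ x.2))
  -- `BgrpP`/`BgrpM` are contained in `Bgrp`
  have hBP : ∀ {x : Cochain A V n}, x ∈ BgrpP A V n → x ∈ Bgrp A V n := by
    intro x hx
    cases n with
    | zero => exact hx
    | succ m =>
      obtain ⟨ψ, -, hψ⟩ := mem_BgrpP_succ.mp hx
      exact mem_Bgrp_succ.mpr ⟨ψ, hψ⟩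
  have hBM : ∀ {x : Cochain A V n}, x ∈ BgrpM A V n → x ∈ Bgrp A V n := by
    intro x hx
    cases n with
    | zero => exact hx
    | succ m =>
      obtain ⟨ψ, -, hψ⟩ := mem_BgrpM_succ.mp hx
      exact mem_Bgrp_succ.mpr ⟨ψ, hψ⟩
  -- the eigen-projections map coboundaries to eigen-coboundaries
  have hprojBP : ∀ {x : Cochain A V n}, x ∈ Bgrp A V n →
      halfC k (x + hochWadj n x) ∈ BgrpP A V n := by
    intro x hx
    cases n with
    | zero =>
      have hx0 : x = 0 := hx
      subst hx0
      have h0 : halfC k ((0 : Cochain A V 0) + hochWadj 0 0) = 0 := by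
        rw [show hochWadj 0 (0 : Cochain A V 0) = 0 from map_zero (WHom A V 0), add_zero]
        exact smul_zero _
      rw [h0]
      exact AddSubgroup.zero_mem _
    | succ m =>
      obtain ⟨ψ, hψ⟩ := mem_Bgrp_succ.mp hx
      refine mem_BgrpP_succ.mpr ⟨halfC k (ψ + hochWadj m ψ), plus_mem k ψ, ?_⟩
      show hochB m ((2 : k)⁻¹ • (ψ + hochWadj m ψ)) = (2 : k)⁻¹ • (x + hochWadj (m + 1) x)
      rw [hochB_ksmul]
      congr 1
      rw [hochB_add, hψ, ← hcomm m ψ, hψ]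
  have hprojBM : ∀ {x : Cochain A V n}, x ∈ Bgrp A V n →
      halfC k (x - hochWadj n x) ∈ BgrpM A V n := by
    intro x hx
    cases n with
    | zero =>
      have hx0 : x = 0 := hx
      subst hx0
      have h0 : halfC k ((0 : Cochain A V 0) - hochWadj 0 0) = 0 := by
        rw [show hochWadj 0 (0 : Cochain A V 0) = 0 from map_zero (WHom A V 0), sub_zero]
        exact smul_zero _
      rw [h0]
      exact AddSubgroup.zero_mem _
    | succ m =>
      obtain ⟨ψ, hψ⟩ := mem_Bgrp_succ.mp hx
      refine mem_BgrpM_succ.mpr ⟨halfC k (ψ - hochWadj m ψ), minus_mem k ψ, ?_⟩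
      show hochB m ((2 : k)⁻¹ • (ψ - hochWadj m ψ)) = (2 : k)⁻¹ • (x - hochWadj (m + 1) x)
      rw [hochB_ksmul]
      congr 1
      have hsub : hochB m (ψ - hochWadj m ψ) = hochB m ψ - hochB m (hochWadj m ψ) :=
        map_sub (bHom A V m) ψ (hochWadj m ψ)
      rw [hsub, hψ, ← hcomm m ψ, hψ]
  -- the maps between the quotients
  let Fp : HHplus A V n →+ HH A V n :=
    QuotientAddGroup.lift _
      ((QuotientAddGroup.mk' ((Bgrp A V n).addSubgroupOf (Zgrp A V n))).comp
        (AddSubgroup.inclusion inf_le_left))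
      (by
        intro x hx
        rw [AddMonoidHom.mem_ker, AddMonoidHom.comp_apply, QuotientAddGroup.mk'_apply,
          QuotientAddGroup.eq_zero_iff, AddSubgroup.mem_addSubgroupOf]
        exact hBP (AddSubgroup.mem_addSubgroupOf.mp hx))
  let Fm : HHminus A V n →+ HH A V n :=
    QuotientAddGroup.lift _
      ((QuotientAddGroup.mk' ((Bgrp A V n).addSubgroupOf (Zgrp A V n))).comp
        (AddSubgroup.inclusion inf_le_left))
      (by
        intro x hx
        rw [AddMonoidHom.mem_ker, AddMonoidHom.comp_apply, QuotientAddGroup.mk'_apply,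
          QuotientAddGroup.eq_zero_iff, AddSubgroup.mem_addSubgroupOf]
        exact hBM (AddSubgroup.mem_addSubgroupOf.mp hx))
  let F : HHplus A V n × HHminus A V n →+ HH A V n := Fp.coprod Fm
  let halfHom : Cochain A V n →+ Cochain A V n :=
    DistribMulAction.toAddMonoidHom (Cochain A V n) ((2 : k)⁻¹)
  let pp : ↥(Zgrp A V n) →+ ↥(Zgrp A V n ⊓ Pgrp A V n) :=
    AddMonoidHom.codRestrict
      ((halfHom.comp (AddMonoidHom.id (Cochain A V n) + WHom A V n)).comp (Zgrp A V n).subtype)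
      (Zgrp A V n ⊓ Pgrp A V n) (fun x => hmemZP x)
  let mp : ↥(Zgrp A V n) →+ ↥(Zgrp A V n ⊓ Mgrp A V n) :=
    AddMonoidHom.codRestrict
      ((halfHom.comp (AddMonoidHom.id (Cochain A V n) - WHom A V n)).comp (Zgrp A V n).subtype)
      (Zgrp A V n ⊓ Mgrp A V n) (fun x => hmemZM x)
  let G : HH A V n →+ HHplus A V n × HHminus A V n :=
    QuotientAddGroup.lift _
      (((QuotientAddGroup.mk' ((BgrpP A V n).addSubgroupOf (Zgrp A V n ⊓ Pgrp A V n))).comp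
          pp).prod
        ((QuotientAddGroup.mk' ((BgrpM A V n).addSubgroupOf (Zgrp A V n ⊓ Mgrp A V n))).comp
          mp))
      (by
        intro x hx
        have hx' : (x : Cochain A V n) ∈ Bgrp A V n := AddSubgroup.mem_addSubgroupOf.mp hx
        rw [AddMonoidHom.mem_ker]
        refine Prod.ext ?_ ?_
        · show (QuotientAddGroup.mk' _) (pp x) = 0
          rw [QuotientAddGroup.mk'_apply, QuotientAddGroup.eq_zero_iff,
            AddSubgroup.mem_addSubgroupOf]
          exact hprojBP hx'
        · show (QuotientAddGroup.mk' _) (mp x) = 0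
          rw [QuotientAddGroup.mk'_apply, QuotientAddGroup.eq_zero_iff,
            AddSubgroup.mem_addSubgroupOf]
          exact hprojBM hx')
  refine ⟨AddMonoidHom.toAddEquiv G F ?_ ?_⟩
  · -- F ∘ G = id
    refine AddMonoidHom.ext fun q => QuotientAddGroup.induction_on q fun z => ?_
    show QuotientAddGroup.mk
        (AddSubgroup.inclusion inf_le_left (pp z) + AddSubgroup.inclusion inf_le_left (mp z))
      = QuotientAddGroup.mk z
    exact congrArg QuotientAddGroup.mk (Subtype.ext (plus_add_minus k (z : Cochain A V n)))
  · -- G ∘ F = id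
    refine AddMonoidHom.ext fun p => ?_
    obtain ⟨u, v⟩ := p
    refine QuotientAddGroup.induction_on u fun x => ?_
    refine QuotientAddGroup.induction_on v fun y => ?_
    have hx : pp (AddSubgroup.inclusion inf_le_left x + AddSubgroup.inclusion inf_le_left y)
        = x := by
      rw [map_add]
      have h1 : pp (AddSubgroup.inclusion inf_le_left x) = x :=
        Subtype.ext (proj_plus_of_mem_P k (AddSubgroup.mem_inf.mp x.2).2)
      have h2 : pp (AddSubgroup.inclusion inf_le_left y) = 0 :=
        Subtype.ext (proj_plus_of_mem_M k (AddSubgroup.mem_inf.mp y.2).2)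
      rw [h1, h2, add_zero]
    have hy : mp (AddSubgroup.inclusion inf_le_left x + AddSubgroup.inclusion inf_le_left y)
        = y := by
      rw [map_add]
      have h1 : mp (AddSubgroup.inclusion inf_le_left x) = 0 :=
        Subtype.ext (proj_minus_of_mem_P k (AddSubgroup.mem_inf.mp x.2).2)
      have h2 : mp (AddSubgroup.inclusion inf_le_left y) = y :=
        Subtype.ext (proj_minus_of_mem_M k (AddSubgroup.mem_inf.mp y.2).2)
      rw [h1, h2, zero_add]
    show (QuotientAddGroup.mk
          (pp (AddSubgroup.inclusion inf_le_left x + AddSubgroup.inclusion inf_le_left y)),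
        QuotientAddGroup.mk
          (mp (AddSubgroup.inclusion inf_le_left x + AddSubgroup.inclusion inf_le_left y)))
      = (QuotientAddGroup.mk x, QuotientAddGroup.mk y)
    rw [hx, hy]

end Aux

/-- The sign-adjusted involution commutes with `b`, the cochain complex splits as the
direct sum of its ±1-eigenspace subcomplexes, and consequently
`HH^n(A,V) ≅ HH^n₊(A,V) ⊕ HH^n₋(A,V)` for every `n`. -/
theorem hochschild_cohomology_dihedral_splitting
    {k A V : Type*}
    [Field k] [StarRing k] [CharZero k]
    [Ring A] [Algebra k A] [StarRing A] [StarModule k A]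
    [AddCommGroup V] [Module k V] [Module A V] [Module Aᵐᵒᵖ V]
    [SMulCommClass A Aᵐᵒᵖ V] [SMulCommClass A k V] [SMulCommClass Aᵐᵒᵖ k V]
    [StarAddMonoid V] [StarModule k V]
    (hstar_left : ∀ (a : A) (v : V), star (a • v) = op (star a) • star v)
    (hstar_right : ∀ (a : A) (v : V), star (op a • v) = star a • star v) :
    (∀ (m : ℕ) (φ : Cochain A V m),
        hochWadj (m + 1) (hochB m φ) = hochB m (hochWadj m φ)) ∧
    (∀ n : ℕ, IsCompl (Pgrp A V n) (Mgrp A V n)) ∧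
    (∀ n : ℕ, Nonempty (HH A V n ≃+ HHplus A V n × HHminus A V n)) := by
  refine ⟨fun m φ => wb_comm hstar_left hstar_right m φ, fun n => eigen_isCompl k n,
    fun n => splitting_iso k (fun m φ => wb_comm hstar_left hstar_right m φ) n⟩
end

section
/- Let H be a Hopf *-algebra with a modular pair in involution (δ, σ) such that σ* = σ. Define w_n on H^⊗n by w_n(h^1 ⊗ ... ⊗ h^n) = σ S^{-1}((h^n)*) ⊗ ... ⊗ σ S^{-1}((h^1)*). Then w_n is an involution: w_n² = Id. -/
open TensorProduct

/- STATEMENT 6: Let H be a Hopf *-algebra with a modular pair in involution (δ, σ) such that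
σ* = σ.  The map w_n(h^1 ⊗ ... ⊗ h^n) = σS⁻¹((h^n)*) ⊗ ... ⊗ σS⁻¹((h^1)*) on H^⊗n is an
involution: w_n² = Id.  Since w_n sends elementary tensors to elementary tensors (factorwise),
the identity is expressed on tuples. -/

variable {k H : Type*}

/-- The twisted antipode `S_δ(h) = δ(h_(1)) S(h_(2))`. -/
noncomputable def twistedAntipode [Field k] [Ring H] [Algebra k H]
    (comul : H →ₗ[k] H ⊗[k] H) (δ : H →ₗ[k] k) (S : H →ₗ[k] H) : H →ₗ[k] H :=
  (TensorProduct.lift (LinearMap.mk₂ k (fun x y => δ x • S y)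
    (fun x x' y => by simp [add_smul])
    (fun c x y => by simp [mul_smul])
    (fun x y y' => by simp [smul_add])
    (fun c x y => by simp only [map_smul]; rw [smul_comm]))).comp comul

/-- The candidate involution on `H^⊗n`, on elementary tensors:
`w_n(h^1⊗...⊗h^n) = σS⁻¹((h^n)*) ⊗ ... ⊗ σS⁻¹((h^1)*)`. -/
noncomputable def hopfWtup [Ring H] [Star H] (Sinv : H → H) (σ : H) (n : ℕ)
    (h : Fin n → H) : Fin n → H :=
  fun j => σ * Sinv (star (h (Fin.rev j)))

theorem hopfWtup_involutive
    [Field k] [StarRing k] [CharZero k]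
    [Ring H] [Algebra k H] [StarRing H]
    (comul : H →ₗ[k] H ⊗[k] H) (δ : H →ₗ[k] k) (S Sinv : H →ₗ[k] H) (σ σi : H)
    -- the antipode is invertible with inverse `Sinv`, and both are anti-multiplicative:
    (hSinvS : ∀ h, Sinv (S h) = h) (hSSinv : ∀ h, S (Sinv h) = h)
    (hSanti : ∀ a b : H, S (a * b) = S b * S a)
    (hSinvanti : ∀ a b : H, Sinv (a * b) = Sinv b * Sinv a)
    -- Hopf *-algebra compatibility `S(h*) = S⁻¹(h)*`:
    (hstarS : ∀ h : H, S (star h) = star (Sinv h))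
    -- σ is group-like and invertible:
    (hσgrouplike : comul σ = σ ⊗ₜ[k] σ) (hσ : σ * σi = 1) (hσ' : σi * σ = 1)
    (hSσ : S σ = σi) (hSinvσ : Sinv σ = σi)
    -- (δ, σ) is a modular pair in involution, and σ is self-adjoint:
    (hMPI : ∀ h, twistedAntipode comul δ S (twistedAntipode comul δ S h) = σ * h * σi)
    (hδσ : δ σ = 1) (hstarσ : star σ = σ)
    (n : ℕ) (h : Fin n → H) :
    hopfWtup Sinv σ n (hopfWtup Sinv σ n h) = h := by
  funext j
  simp only [hopfWtup, Fin.rev_rev]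
  rw [star_mul, hstarσ]
  have hkey : star (Sinv (star (h j))) = S (h j) := by
    rw [← hstarS, star_star]
  rw [hkey, hSinvanti, hSinvσ, hSinvS, ← mul_assoc, hσ, one_mul]
end

section
/- Let H be a Hopf algebra whose group-like elements G(H) form an abelian group. For group-likes σ_1, σ_2, the cup product Ψ ⌣ Φ := Ψ ⊗ (σ_1 ▷ Φ) on cochains Ψ ∈ H^⊗p (for the coefficient σ_1) and Φ ∈ H^⊗q (for coefficient σ_2), where ▷ is the diagonal left multiplication action, satisfies the graded Leibniz rule d_{p+q}(Ψ⌣Φ) = d_p(Ψ)⌣Φ + (−1)^p Ψ⌣d_q(Φ) with respect to the coalgebra Hochschild differentials with group-like coefficients. -/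
open TensorProduct PiTensorProduct

/- STATEMENT 10: Let H be a Hopf algebra whose group-like elements form an abelian group.
For group-likes σ₁, σ₂, the cup product Ψ ⌣ Φ := Ψ ⊗ (σ₁ ▷ Φ) on cochains Ψ ∈ H^⊗p (for
the coefficient σ₁) and Φ ∈ H^⊗q (coefficient σ₂) satisfies the graded Leibniz rule
  d_{p+q}(Ψ⌣Φ) = d_p(Ψ)⌣Φ + (−1)^p Ψ⌣d_q(Φ)
for the coalgebra Hochschild differentials with group-like coefficients (d_0 inserts 1 on
the left, d_i applies Δ to the i-th factor, the last coface appends the coefficient on the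
right; d = Σ (−1)^i d_i).  The rule is expressed on elementary tensors, the comultiplications
being given by finite Sweedler representations. -/

variable {k H : Type*}

/-- Insert the two legs `x ⊗ y` of a comultiplication at (0-based) position `p` of a tuple. -/
noncomputable def splitTup {H : Type*} {m : ℕ} (h : Fin m → H) (p : Fin m) (x y : H) :
    Fin (m + 1) → H :=
  Fin.insertNth p.succ y (Function.update h p x)

/-- Recast a tuple along an equality of lengths. -/
def recast {H : Type*} {a b : ℕ} (h : a = b) (t : Fin a → H) : Fin b → H :=
  fun j => t (Fin.cast h.symm j)

section AuxApply

lemma auxCast {a b j : ℕ} (h : a = b) (hj : j < b) : j < a := h ▸ hj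
lemma auxApp {p q j : ℕ} (hj : j < p + q) (h : ¬ j < p) : j - p < q := by omega
lemma auxCons {m j : ℕ} (hj : j < m + 1) (h : ¬ j = 0) : j - 1 < m := by omega
lemma auxSplit {m r j : ℕ} (hr : r < m) (hj : j < m + 1) : j - 1 < m := by omega


lemma recast_apply {a b : ℕ} (h : a = b) (t : Fin a → H) (j : Fin b) :
    recast h t j = t ⟨j.val, auxCast h j.isLt⟩ := rfl

lemma append_apply' {p q : ℕ} (a : Fin p → H) (b : Fin q → H) (j : Fin (p + q)) :
    Fin.append a b j = if h : j.val < p then a ⟨j.val, h⟩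
      else b ⟨j.val - p, auxApp j.isLt h⟩ := by
  by_cases h : j.val < p
  · rw [dif_pos h]
    conv_lhs => rw [show j = Fin.castAdd q ⟨j.val, h⟩ from Fin.ext rfl, Fin.append_left]
  · rw [dif_neg h]
    have e : j = Fin.natAdd p ⟨j.val - p, auxApp j.isLt h⟩ := by
      apply Fin.ext; simp only [Fin.natAdd_mk]; omega
    conv_lhs => rw [e, Fin.append_right]

lemma cons_apply' {m : ℕ} (x : H) (t : Fin m → H) (j : Fin (m + 1)) :
    (Fin.cons x t : Fin (m+1) → H) j =
      if h : j.val = 0 then x else t ⟨j.val - 1, auxCons j.isLt h⟩ := by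
  rcases j with ⟨j, hj⟩
  cases j with
  | zero => rfl
  | succ i =>
    rw [dif_neg (Nat.succ_ne_zero i)]
    exact (show (Fin.cons x t : Fin (m+1) → H) (Fin.succ ⟨i, by omega⟩) = _ from
      Fin.cons_succ ..).trans (congrArg t (Fin.ext rfl))

lemma snoc_apply' {m : ℕ} (t : Fin m → H) (x : H) (j : Fin (m + 1)) :
    (Fin.snoc t x : Fin (m+1) → H) j = if h : j.val < m then t ⟨j.val, h⟩ else x := by
  by_cases h : j.val < m
  · rw [dif_pos h]
    conv_lhs => rw [show j = Fin.castSucc ⟨j.val, h⟩ from Fin.ext rfl, Fin.snoc_castSucc]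
  · rw [dif_neg h]
    have e : j = Fin.last m := by apply Fin.ext; simp only [Fin.val_last]
                                  have := j.isLt; omega
    rw [e, Fin.snoc_last]

lemma splitTup_apply {m : ℕ} (h : Fin m → H) (r : Fin m) (x y : H) (j : Fin (m + 1)) :
    splitTup h r x y j =
      if h1 : j.val < r.val then h ⟨j.val, h1.trans r.isLt⟩
      else if h2 : j.val = r.val then x
      else if h3 : j.val = r.val + 1 then y
      else h ⟨j.val - 1, auxSplit r.isLt j.isLt⟩ := by
  unfold splitTup
  rcases lt_trichotomy (j : ℕ) ((r.succ : Fin (m+1)) : ℕ) with hc | hc | hc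
  · have hlt : j < r.succ := hc
    rw [Fin.insertNth_apply_below hlt]
    simp only [eq_rec_constant, Function.update_apply]
    have hcv : ((j.castPred (Fin.ne_last_of_lt hlt)) : ℕ) = (j : ℕ) := rfl
    simp only [Fin.val_succ] at hc
    by_cases he : (j : ℕ) = (r : ℕ)
    · rw [if_pos (Fin.ext (hcv.trans he)), dif_neg (by omega), dif_pos he]
    · rw [if_neg (fun hh => he (hcv.symm.trans (congrArg Fin.val hh))),
        dif_pos (by omega)]
      exact congrArg h (Fin.ext hcv)
  · have he : j = r.succ := Fin.ext hc
    subst he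
    rw [Fin.insertNth_apply_same]
    rw [dif_neg (by simp only [Fin.val_succ]; omega),
      dif_neg (by simp only [Fin.val_succ]; omega),
      dif_pos (by simp only [Fin.val_succ])]
  · have hgt : r.succ < j := hc
    rw [Fin.insertNth_apply_above hgt]
    simp only [eq_rec_constant, Function.update_apply]
    have hcv : ((j.pred (Fin.ne_zero_of_lt hgt)) : ℕ) = (j : ℕ) - 1 := rfl
    simp only [Fin.val_succ] at hc
    rw [if_neg (fun hh => by have := congrArg Fin.val hh; rw [hcv] at this; omega),
      dif_neg (by omega), dif_neg (by omega), dif_neg (by omega)]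
    exact congrArg h (Fin.ext hcv)

end AuxApply

section Tuples
variable [Monoid H] {p q : ℕ}

/-- cons commutes with append. -/
lemma tupL0 (x : H) (g : Fin p → H) (s : Fin q → H) :
    recast (show p+q+1 = p+q+1 from rfl) (Fin.cons x (Fin.append g s)) =
      recast (show p+1+q = p+q+1 from Nat.add_right_comm p 1 q) (Fin.append (Fin.cons x g) s) := by
  funext j
  simp only [recast_apply, cons_apply', append_apply']
  split_ifs <;>
    first
    | rfl
    | omega
    | (exact congrArg _ (Fin.mk_eq_mk.mpr (by omega)))

/-- snoc c on the left block vs cons c absorbed on the right block. -/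
lemma tupLx (c : H) (g : Fin p → H) (f : Fin q → H) :
    recast (show p+1+q = p+q+1 from Nat.add_right_comm p 1 q) (Fin.append (Fin.snoc g c) fun j => c * f j) =
      recast (show p+(q+1) = p+q+1 from (Nat.add_assoc p q 1).symm)
        (Fin.append g fun j : Fin (q+1) => c * (Fin.cons 1 f : Fin (q+1) → H) j) := by
  funext j
  simp only [recast_apply, append_apply', snoc_apply', cons_apply']
  split_ifs <;>
    first
    | rfl
    | omega
    | (exact congrArg _ (Fin.mk_eq_mk.mpr (by omega)))
    | (exact congrArg (c * ·) (congrArg _ (Fin.mk_eq_mk.mpr (by omega))))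
    | (rw [mul_one])

/-- snoc the coefficient on the right. -/
lemma tupLl (c d : H) (g : Fin p → H) (f : Fin q → H) :
    recast (show p+q+1 = p+q+1 from rfl) (Fin.snoc (Fin.append g fun j => c * f j) (c * d)) =
      recast (show p+(q+1) = p+q+1 from (Nat.add_assoc p q 1).symm)
        (Fin.append g fun j : Fin (q+1) => c * (Fin.snoc f d : Fin (q+1) → H) j) := by
  funext j
  simp only [recast_apply, append_apply', snoc_apply']
  split_ifs <;>
    first
    | rfl
    | omega
    | (exact congrArg _ (Fin.mk_eq_mk.mpr (by omega)))
    | (exact congrArg (c * ·) (congrArg _ (Fin.mk_eq_mk.mpr (by omega))))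

/-- splitTup in the left block commutes with append. -/
lemma tupB1 (g : Fin p → H) (s : Fin q → H) (r : Fin p) (x y : H) :
    splitTup (Fin.append g s) (Fin.castAdd q r) x y =
      recast (show p+1+q = p+q+1 from Nat.add_right_comm p 1 q) (Fin.append (splitTup g r x y) s) := by
  funext j
  simp only [recast_apply, splitTup_apply, append_apply', Fin.coe_castAdd]
  split_ifs <;>
    first
    | rfl
    | omega
    | (exact congrArg _ (Fin.mk_eq_mk.mpr (by omega)))

/-- splitTup in the right block commutes with append and left multiplication. -/
lemma tupB2 (c : H) (g : Fin p → H) (f : Fin q → H) (r : Fin q) (x y : H) :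
    splitTup (Fin.append g fun j => c * f j) (Fin.natAdd p r) (c * x) (c * y) =
      recast (show p+(q+1) = p+q+1 from (Nat.add_assoc p q 1).symm)
        (Fin.append g fun j' => c * splitTup f r x y j') := by
  funext j
  simp only [recast_apply, splitTup_apply, append_apply', Fin.coe_natAdd]
  split_ifs <;>
    first
    | rfl
    | omega
    | (exact congrArg _ (Fin.mk_eq_mk.mpr (by omega)))
    | (exact congrArg (c * ·) (congrArg _ (Fin.mk_eq_mk.mpr (by omega))))

end Tuples

lemma sign_shift {M : Type*} [AddCommGroup M] (p : ℕ) {q : ℕ} (S : Fin q → M) :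
    ∑ r : Fin q, ((-1 : ℤ) ^ (p + (r : ℕ) + 1)) • S r =
      ((-1 : ℤ) ^ p) • ∑ r : Fin q, ((-1 : ℤ) ^ ((r : ℕ) + 1)) • S r := by
  rw [Finset.smul_sum]
  refine Finset.sum_congr rfl fun r _ => ?_
  rw [smul_smul, ← pow_add, ← add_assoc]

theorem cup_leibniz
    [Field k] [Ring H] [Algebra k H]
    (comul : H →ₗ[k] H ⊗[k] H) (σ₁ σ₂ : H)
    (hcomul_mul : ∀ a b : H, comul (a * b) = comul a * comul b)
    (hσ₁ : comul σ₁ = σ₁ ⊗ₜ[k] σ₁) (hσ₂ : comul σ₂ = σ₂ ⊗ₜ[k] σ₂)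
    (hσcomm : σ₁ * σ₂ = σ₂ * σ₁)
    (ι : Type) (_ : Fintype ι)
    (p q : ℕ) (g : Fin p → H) (f : Fin q → H)
    -- Sweedler representations of the coproducts of the entries:
    (Ug Wg : Fin p → ι → H) (hrepg : ∀ i, comul (g i) = ∑ j : ι, Ug i j ⊗ₜ[k] Wg i j)
    (Uf Wf : Fin q → ι → H) (hrepf : ∀ i, comul (f i) = ∑ j : ι, Uf i j ⊗ₜ[k] Wf i j)
    (hrepσf : ∀ i, comul (σ₁ * f i) = ∑ j : ι, (σ₁ * Uf i j) ⊗ₜ[k] (σ₁ * Wf i j)) :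
    -- `d(Ψ ⌣ Φ) = d(Ψ) ⌣ Φ + (−1)^p Ψ ⌣ d(Φ)` in `H^⊗(p+q+1)`, where
    -- `Ψ ⌣ Φ` is the tuple `A = g ⧺ (σ₁ ▷ f)`:
    ((tprod k (recast (by omega) (Fin.cons (1 : H) (Fin.append g fun j => σ₁ * f j)))
        : ⨂[k] _ : Fin (p + q + 1), H)
      + (∑ r : Fin (p + q), ((-1 : ℤ) ^ ((r : ℕ) + 1)) •
          ∑ j : ι, tprod k (splitTup (Fin.append g fun j' => σ₁ * f j') r
            (Fin.append Ug (fun i j' => σ₁ * Uf i j') r j)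
            (Fin.append Wg (fun i j' => σ₁ * Wf i j') r j)))
      + ((-1 : ℤ) ^ (p + q + 1)) •
          PiTensorProduct.tprod k (recast (by omega)
            (Fin.snoc (Fin.append g fun j => σ₁ * f j) (σ₁ * σ₂)))) =
    -- d(Ψ) ⌣ Φ :
    (((tprod k (recast (show p+1+q = p+q+1 by omega) (Fin.append (Fin.cons (1 : H) g) fun j => σ₁ * f j))
        : ⨂[k] _ : Fin (p + q + 1), H)
      + (∑ r : Fin p, ((-1 : ℤ) ^ ((r : ℕ) + 1)) •
          ∑ j : ι, tprod k (recast (show p+1+q = p+q+1 by omega)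
            (Fin.append (splitTup g r (Ug r j) (Wg r j)) fun j' => σ₁ * f j')))
      + ((-1 : ℤ) ^ (p + 1)) •
          tprod k (recast (show p+1+q = p+q+1 by omega) (Fin.append (Fin.snoc g σ₁) fun j => σ₁ * f j)))
    -- + (−1)^p Ψ ⌣ d(Φ) :
    + ((-1 : ℤ) ^ p) •
      (tprod k (recast (show p+(q+1) = p+q+1 by omega) (Fin.append g fun j : Fin (q+1) => σ₁ * (Fin.cons (1 : H) f : Fin (q+1) → H) j))
        + (∑ r : Fin q, ((-1 : ℤ) ^ ((r : ℕ) + 1)) •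
            ∑ j : ι, tprod k (recast (show p+(q+1) = p+q+1 by omega)
              (Fin.append g fun j' => σ₁ * splitTup f r (Uf r j) (Wf r j) j')))
        + ((-1 : ℤ) ^ (q + 1)) •
            tprod k (recast (show p+(q+1) = p+q+1 by omega)
              (Fin.append g fun j : Fin (q+1) => σ₁ * (Fin.snoc f σ₂ : Fin (q+1) → H) j)))) := by
  rw [Fin.sum_univ_add
    (f := fun r : Fin (p + q) => ((-1 : ℤ) ^ ((r : ℕ) + 1)) •
      ∑ j : ι, tprod k (splitTup (Fin.append g fun j' => σ₁ * f j') r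
        (Fin.append Ug (fun i j' => σ₁ * Uf i j') r j)
        (Fin.append Wg (fun i j' => σ₁ * Wf i j') r j)))]
  simp only [Fin.coe_castAdd, Fin.coe_natAdd, Fin.append_left, Fin.append_right]
  simp only [tupB1, tupB2, tupL0, tupLl]
  rw [sign_shift]
  rw [show recast (show p+1+q = p+q+1 by omega)
      (Fin.append (Fin.snoc g σ₁) fun j => σ₁ * f j) =
    recast (show p+(q+1) = p+q+1 by omega)
      (Fin.append g fun j : Fin (q+1) => σ₁ * (Fin.cons 1 f : Fin (q+1) → H) j) from tupLx σ₁ g f]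
  module
end

section
/- In the complexified QUE algebra 𝔘_q(𝔤) of a semisimple Lie algebra of rank ℓ (with relations K_iE_jK_i^{-1} = q_i^{a_{ij}/2}E_j, K_iF_jK_i^{-1} = q_i^{-a_{ij}/2}F_j, [E_i,F_j] = δ_{ij}(K_i²−K_i^{-2})/(q_i−q_i^{-1})), the pair (K²_{2ρ}, ε), where K²_{2ρ} = K_1²···K_ℓ², is a modular pair in involution: ε(K²_{2ρ}) = 1 and S_ε² = S² = Ad_{K²_{2ρ}}. -/
/- STATEMENT 13: In the complexified QUE algebra 𝔘_q(𝔤) the pair (K²_{2ρ}, ε) is a modular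
pair in involution: ε(K²_{2ρ}) = 1 and S_ε² = S² = Ad_{K²_{2ρ}}.  Following the given context,
this is verified on generators, and the statement for 𝔘_q(sl_2) with σ = K² suffices: in
𝔘_q(sl_2) (relations KK⁻¹ = K⁻¹K = 1, KEK⁻¹ = qE, KFK⁻¹ = q⁻¹F,
[E,F] = (K²−K⁻²)/(q−q⁻¹); antipode S(K) = K⁻¹, S(E) = −qE, S(F) = −q⁻¹F; counit ε(K) =
ε(K⁻¹) = 1, ε(E) = ε(F) = 0), one has ε(K²) = 1 and S²(x) = K² x K⁻² for every generator x. -/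

variable (k : Type) [Field k]

/-- Defining relations of `𝔘_q(sl_2)` on the free algebra on `0 ↦ E`, `1 ↦ F`,
`2 ↦ K`, `3 ↦ K⁻¹`. -/
inductive uqsl2Rel (q : k) : FreeAlgebra k (Fin 4) → FreeAlgebra k (Fin 4) → Prop
  | KKi : uqsl2Rel q (FreeAlgebra.ι k 2 * FreeAlgebra.ι k 3) 1
  | KiK : uqsl2Rel q (FreeAlgebra.ι k 3 * FreeAlgebra.ι k 2) 1
  | KE : uqsl2Rel q (FreeAlgebra.ι k 2 * FreeAlgebra.ι k 0 * FreeAlgebra.ι k 3)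
      (q • FreeAlgebra.ι k 0)
  | KF : uqsl2Rel q (FreeAlgebra.ι k 2 * FreeAlgebra.ι k 1 * FreeAlgebra.ι k 3)
      (q⁻¹ • FreeAlgebra.ι k 1)
  | EF : uqsl2Rel q (FreeAlgebra.ι k 0 * FreeAlgebra.ι k 1 - FreeAlgebra.ι k 1 * FreeAlgebra.ι k 0)
      ((q - q⁻¹)⁻¹ • (FreeAlgebra.ι k 2 * FreeAlgebra.ι k 2 -
        FreeAlgebra.ι k 3 * FreeAlgebra.ι k 3))

/-- The complexified quantum enveloping algebra `𝔘_q(sl_2)`. -/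
abbrev Uqsl2 (q : k) : Type := RingQuot (uqsl2Rel k q)

noncomputable def uqE (q : k) : Uqsl2 k q := RingQuot.mkAlgHom k _ (FreeAlgebra.ι k 0)
noncomputable def uqF (q : k) : Uqsl2 k q := RingQuot.mkAlgHom k _ (FreeAlgebra.ι k 1)
noncomputable def uqK (q : k) : Uqsl2 k q := RingQuot.mkAlgHom k _ (FreeAlgebra.ι k 2)
noncomputable def uqKi (q : k) : Uqsl2 k q := RingQuot.mkAlgHom k _ (FreeAlgebra.ι k 3)

/-- `(K², ε)` is a modular pair in involution for `𝔘_q(sl_2)`: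
`ε(K²) = 1` and `S² = S_ε² = Ad_{K²}` (verified on the generators). -/
theorem uqsl2_modular_pair_in_involution (q : k) (hq0 : q ≠ 0) (hq4 : q ^ 4 ≠ 1)
    (S : Uqsl2 k q →ₗ[k] Uqsl2 k q) (ε : Uqsl2 k q →ₗ[k] k)
    (hSanti : ∀ a b, S (a * b) = S b * S a)
    (hSK : S (uqK k q) = uqKi k q) (hSKi : S (uqKi k q) = uqK k q)
    (hSE : S (uqE k q) = -(q • uqE k q)) (hSF : S (uqF k q) = -(q⁻¹ • uqF k q))
    (hεmul : ∀ a b, ε (a * b) = ε a * ε b)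
    (hεK : ε (uqK k q) = 1) (hεKi : ε (uqKi k q) = 1)
    (hεE : ε (uqE k q) = 0) (hεF : ε (uqF k q) = 0) :
    ε (uqK k q * uqK k q) = 1 ∧
    (∀ x ∈ ({uqE k q, uqF k q, uqK k q, uqKi k q} : Set (Uqsl2 k q)),
      S (S x) = (uqK k q * uqK k q) * x * (uqKi k q * uqKi k q)) := by
  have hKKi : uqK k q * uqKi k q = 1 := by
    have := RingQuot.mkAlgHom_rel k (uqsl2Rel.KKi (k := k) (q := q))
    simpa [uqK, uqKi, map_mul] using this
  have hKiK : uqKi k q * uqK k q = 1 := by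
    have := RingQuot.mkAlgHom_rel k (uqsl2Rel.KiK (k := k) (q := q))
    simpa [uqK, uqKi, map_mul] using this
  have hKE : uqK k q * uqE k q * uqKi k q = q • uqE k q := by
    have := RingQuot.mkAlgHom_rel k (uqsl2Rel.KE (k := k) (q := q))
    simpa [uqK, uqKi, uqE, map_mul] using this
  have hKF : uqK k q * uqF k q * uqKi k q = q⁻¹ • uqF k q := by
    have := RingQuot.mkAlgHom_rel k (uqsl2Rel.KF (k := k) (q := q))
    simpa [uqK, uqKi, uqF, map_mul] using this
  refine ⟨by rw [hεmul, hεK]; ring, ?_⟩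
  intro x hx
  have hE : (uqK k q * uqK k q) * uqE k q * (uqKi k q * uqKi k q)
      = (q * q) • uqE k q := by
    have : (uqK k q * uqK k q) * uqE k q * (uqKi k q * uqKi k q)
        = uqK k q * (uqK k q * uqE k q * uqKi k q) * uqKi k q := by noncomm_ring
    rw [this, hKE, mul_smul_comm, smul_mul_assoc, hKE, smul_smul]
  have hF : (uqK k q * uqK k q) * uqF k q * (uqKi k q * uqKi k q)
      = (q⁻¹ * q⁻¹) • uqF k q := by
    have : (uqK k q * uqK k q) * uqF k q * (uqKi k q * uqKi k q)
        = uqK k q * (uqK k q * uqF k q * uqKi k q) * uqKi k q := by noncomm_ring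
    rw [this, hKF, mul_smul_comm, smul_mul_assoc, hKF, smul_smul]
  have hA : ∀ x : Uqsl2 k q, uqK k q * (uqKi k q * x) = x := fun x => by
    rw [← mul_assoc, hKKi, one_mul]
  have hB : ∀ x : Uqsl2 k q, uqKi k q * (uqK k q * x) = x := fun x => by
    rw [← mul_assoc, hKiK, one_mul]
  rcases hx with h | h | h | h
  · subst h
    rw [hSE, map_neg, map_smul, hSE, hE]
    simp [smul_smul]
  · subst h
    rw [hSF, map_neg, map_smul, hSF, hF]
    simp [smul_smul]
  · subst h
    rw [hSK, hSKi]
    simp [mul_assoc, hA, hB, hKKi, hKiK]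
  · simp only [Set.mem_singleton_iff] at h
    subst h
    rw [hSKi, hSK]
    simp [mul_assoc, hA, hB, hKKi, hKiK]
end

section
/- Let H be a Hopf *-coalgebra (a Hopf algebra that is a *-coalgebra with (hg)* = h*g*, 1* = 1, (S∘*)² = Id), with group-like σ satisfying σ* = σ^{-1} and S_σ² = Id, where S_σ(h) = σS(h). Then the map θ(h^1⊗...⊗h^n) = S_σ(h^1_(1)h^2_(1)···h^n_(1)) ⊗ h^1_(2) ⊗ ... ⊗ h^n_(2) from CC_n(H;σ,ε) to CC_n(H) (the cyclic module of H as an algebra) intertwines the involutions: ω_n ∘ θ = θ ∘ ω_n, where on CC_n(H;σ,ε) the involution is ω_n(h^1⊗...⊗h^n) = S^{-1}((h^n)*_(1))⊗...⊗S^{-1}((h^1)*_(1)) ε((h^1)*_(2)···(h^n)*_(2)) and on CC_n(H) the algebra dihedral involution uses the *-structure *∘S. -/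
open TensorProduct PiTensorProduct

/- STATEMENT 17: Let H be a Hopf *-coalgebra (a Hopf algebra which is a *-coalgebra with
(hg)* = h*g*, 1* = 1, (S∘*)² = Id), with group-like σ satisfying σ* = σ⁻¹ and S_σ² = Id,
where S_σ(h) = σS(h).  Then the map
  θ(h^1⊗...⊗h^n) = S_σ(h^1_(1)···h^n_(1)) ⊗ h^1_(2) ⊗ ... ⊗ h^n_(2)
from CC_n(H;σ,ε) to CC_n(H) intertwines the involutions: ω_n ∘ θ = θ ∘ ω_n, where on
CC_n(H;σ,ε) the involution is
  ω_n(h^1⊗...⊗h^n) = S⁻¹((h^n)*_(1))⊗...⊗S⁻¹((h^1)*_(1)) ε((h^1)*_(2)···(h^n)*_(2))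
and on CC_n(H) the algebra dihedral involution ω_n(a_0⊗...⊗a_n) = a_0^⋆ ⊗ a_n^⋆ ⊗ ... ⊗ a_1^⋆
uses the *-structure a^⋆ = S(a)*.  The identity is expressed on elementary tensors, all
comultiplications being given by finite Sweedler representations (using
(h^i)*_(1) ⊗ (h^i)*_(2) = (h^i_(2))* ⊗ (h^i_(1))*, the *-coalgebra axiom). -/

set_option maxHeartbeats 1600000
set_option synthInstance.maxHeartbeats 400000
set_option linter.unusedSectionVars false
set_option linter.unusedVariables false

section ShapeHelpers

variable {k H : Type*} [Field k] [Ring H] [Algebra k H]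


private noncomputable def shape (n : ℕ) (f : H →ₗ[k] H) {κ : Type} [Fintype κ]
    (P Q : Fin n → κ → H) : ⨂[k] (_ : Fin (n + 1)), H :=
  ∑ J : Fin n → κ, tprod k
    (Fin.cons (f ((List.ofFn fun i => P i (J i)).prod)) (fun i => Q i (J i)))

private lemma ofFn_update {n : ℕ} (g : Fin n → H) (i₀ : Fin n) (y : H) :
    List.ofFn (Function.update g i₀ y) = (List.ofFn g).set i₀ y := by
  apply List.ext_getElem
  · simp
  · intro i h1 h2
    simp only [List.getElem_ofFn, List.getElem_set, List.getElem_ofFn] at *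
    rcases eq_or_ne (i₀ : ℕ) i with h | h
    · rw [if_pos h, Function.update_apply, if_pos (by ext; simp [h.symm, Fin.val_cast_of_lt])]
    · rw [if_neg h, Function.update_apply, if_neg (by intro hc; exact h (by simp [← hc]))]

-- cons-tprod bilinear helper
private noncomputable def consBil (n : ℕ) (f : H →ₗ[k] H) (a b : H) (t : Fin n → H)
    (r : Fin n) : H →ₗ[k] H →ₗ[k] ⨂[k] (_ : Fin (n + 1)), H :=
  LinearMap.mk₂ k
    (fun x y => tprod k (Fin.cons (f (a * x * b)) (Function.update t r y)))
    (by
      intro x x' y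
      have hc : ∀ z : H, (Fin.cons z (Function.update t r y) : Fin (n+1) → H)
          = Function.update (Fin.cons 0 (Function.update t r y)) 0 z :=
        fun z => (Fin.update_cons_zero _ _ _).symm
      rw [mul_add, add_mul, map_add, hc, MultilinearMap.map_update_add,
        Fin.update_cons_zero, Fin.update_cons_zero])
    (by
      intro c x y
      have hc : ∀ z : H, (Fin.cons z (Function.update t r y) : Fin (n+1) → H)
          = Function.update (Fin.cons 0 (Function.update t r y)) 0 z :=
        fun z => (Fin.update_cons_zero _ _ _).symm
      rw [mul_smul_comm, smul_mul_assoc, map_smul, hc, MultilinearMap.map_update_smul,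
        Fin.update_cons_zero])
    (by
      intro x y y'
      rw [Fin.cons_update, MultilinearMap.map_update_add, ← Fin.cons_update, ← Fin.cons_update])
    (by
      intro c x y
      rw [Fin.cons_update, MultilinearMap.map_update_smul, ← Fin.cons_update])

private lemma shape_single {n : ℕ} (f : H →ₗ[k] H) {κ : Type} [Fintype κ]
    (P Q P' Q' : Fin n → κ → H) (i₀ : Fin n)
    (hoffP : ∀ i, i ≠ i₀ → P i = P' i) (hoffQ : ∀ i, i ≠ i₀ → Q i = Q' i)
    (hat : ∑ j : κ, P i₀ j ⊗ₜ[k] Q i₀ j = ∑ j : κ, P' i₀ j ⊗ₜ[k] Q' i₀ j) :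
    shape n f P Q = shape n f P' Q' := by
  classical
  have split : ∀ R₁ R₂ : Fin n → κ → H,
      shape n f R₁ R₂ = ∑ r : { j // j ≠ i₀ } → κ, ∑ x : κ,
        tprod k (Fin.cons
          (f ((List.ofFn fun i => R₁ i ((Equiv.funSplitAt i₀ κ).symm (x, r) i)).prod))
          (fun i => R₂ i ((Equiv.funSplitAt i₀ κ).symm (x, r) i)) : Fin (n+1) → H) := by
    intro R₁ R₂
    unfold shape
    rw [← Equiv.sum_comp (Equiv.funSplitAt i₀ κ).symm, Fintype.sum_prod_type]
    exact Finset.sum_comm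
  rw [split P Q, split P' Q']
  refine Finset.sum_congr rfl fun r _ => ?_
  set Jf : κ → Fin n → κ := fun x => (Equiv.funSplitAt i₀ κ).symm (x, r) with hJf
  have hJi₀ : ∀ x, Jf x i₀ = x := by intro x; simp [hJf]
  have hJne : ∀ (x : κ) (i : Fin n) (h : i ≠ i₀), Jf x i = r ⟨i, h⟩ := by
    intro x i h
    simp [hJf, Equiv.funSplitAt_symm_apply, h]
  set g₀ : Fin n → H := fun i => if h : i = i₀ then 0 else P i (r ⟨i, h⟩) with hg₀
  set t₀ : Fin n → H := fun i => if h : i = i₀ then 0 else Q i (r ⟨i, h⟩) with ht₀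
  have hfun : ∀ x, (fun i => P i (Jf x i)) = Function.update g₀ i₀ (P i₀ x) := by
    intro x; funext i
    rcases eq_or_ne i i₀ with h | h
    · subst h; rw [Function.update_self, hJi₀]
    · rw [Function.update_of_ne h, hJne x i h, hg₀]; simp [h]
  have htail : ∀ x, (fun i => Q i (Jf x i)) = Function.update t₀ i₀ (Q i₀ x) := by
    intro x; funext i
    rcases eq_or_ne i i₀ with h | h
    · subst h; rw [Function.update_self, hJi₀]
    · rw [Function.update_of_ne h, hJne x i h, ht₀]; simp [h]
  have hfun' : ∀ x, (fun i => P' i (Jf x i)) = Function.update g₀ i₀ (P' i₀ x) := by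
    intro x; funext i
    rcases eq_or_ne i i₀ with h | h
    · subst h; rw [Function.update_self, hJi₀]
    · rw [Function.update_of_ne h, hJne x i h, hg₀]; simp [h, ← hoffP i h]
  have htail' : ∀ x, (fun i => Q' i (Jf x i)) = Function.update t₀ i₀ (Q' i₀ x) := by
    intro x; funext i
    rcases eq_or_ne i i₀ with h | h
    · subst h; rw [Function.update_self, hJi₀]
    · rw [Function.update_of_ne h, hJne x i h, ht₀]; simp [h, ← hoffQ i h]
  set pre := ((List.ofFn g₀).take i₀).prod with hpre
  set post := ((List.ofFn g₀).drop (i₀ + 1)).prod with hpost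
  have key : ∀ (y z : H),
      tprod k (Fin.cons (f ((List.ofFn (Function.update g₀ i₀ y)).prod))
        (Function.update t₀ i₀ z) : Fin (n+1) → H) = consBil n f pre post t₀ i₀ y z := by
    intro y z
    rw [ofFn_update, List.prod_set]
    simp only [List.length_ofFn, Fin.is_lt, if_pos]
    rfl
  calc (∑ x : κ, tprod k (Fin.cons (f ((List.ofFn fun i => P i (Jf x i)).prod))
        (fun i => Q i (Jf x i)) : Fin (n+1) → H))
      = ∑ x : κ, consBil n f pre post t₀ i₀ (P i₀ x) (Q i₀ x) := by
        refine Finset.sum_congr rfl fun x _ => ?_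
        rw [hfun, htail, key]
    _ = TensorProduct.lift (consBil n f pre post t₀ i₀) (∑ x : κ, P i₀ x ⊗ₜ[k] Q i₀ x) := by
        rw [map_sum]; simp [TensorProduct.lift.tmul]
    _ = TensorProduct.lift (consBil n f pre post t₀ i₀) (∑ x : κ, P' i₀ x ⊗ₜ[k] Q' i₀ x) := by
        rw [hat]
    _ = ∑ x : κ, consBil n f pre post t₀ i₀ (P' i₀ x) (Q' i₀ x) := by
        rw [map_sum]; simp [TensorProduct.lift.tmul]
    _ = _ := by
        refine Finset.sum_congr rfl fun x _ => ?_
        rw [hfun', htail', key]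

private lemma shape_rep {n : ℕ} (f : H →ₗ[k] H) {κ : Type} [Fintype κ]
    (P Q P' Q' : Fin n → κ → H)
    (hz : ∀ i, ∑ j : κ, P i j ⊗ₜ[k] Q i j = ∑ j : κ, P' i j ⊗ₜ[k] Q' i j) :
    shape n f P Q = shape n f P' Q' := by
  have key : ∀ d : ℕ, d ≤ n →
      shape n f P Q = shape n f (fun i => if (i : ℕ) < d then P' i else P i)
        (fun i => if (i : ℕ) < d then Q' i else Q i) := by
    intro d
    induction d with
    | zero => intro _; simp
    | succ d ih =>
      intro hd
      rw [ih (Nat.le_of_succ_le hd)]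
      refine shape_single f _ _ _ _ ⟨d, hd⟩ (fun i hi => ?_) (fun i hi => ?_) ?_
      · have hne : (i : ℕ) ≠ d := fun hc => hi (Fin.ext hc)
        rcases Nat.lt_or_ge (i : ℕ) d with h' | h'
        · rw [if_pos h', if_pos (by omega)]
        · rw [if_neg (by omega), if_neg (by omega)]
      · have hne : (i : ℕ) ≠ d := fun hc => hi (Fin.ext hc)
        rcases Nat.lt_or_ge (i : ℕ) d with h' | h'
        · rw [if_pos h', if_pos (by omega)]
        · rw [if_neg (by omega), if_neg (by omega)]
      · have h1 : ¬(((⟨d, hd⟩ : Fin n) : ℕ) < d) := by simp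
        have h2 : (((⟨d, hd⟩ : Fin n) : ℕ) < d + 1) := by simp
        rw [if_neg h1, if_neg h1, if_pos h2, if_pos h2]
        exact hz _
  have := key n le_rfl
  simpa [Fin.is_lt] using this

private lemma shape_pad {n : ℕ} (f : H →ₗ[k] H) {κ κ' : Type} [Fintype κ] [Fintype κ']
    (P Q : Fin n → κ → H) :
    shape n f (fun i => Sum.elim (P i) (0 : κ' → H)) (fun i => Sum.elim (Q i) 0)
      = shape n f P Q := by
  classical
  unfold shape
  set F : (Fin n → κ ⊕ κ') → ⨂[k] (_ : Fin (n+1)), H := fun J =>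
    tprod k (Fin.cons (f ((List.ofFn fun i => Sum.elim (P i) (0 : κ' → H) (J i)).prod))
      (fun i => Sum.elim (Q i) 0 (J i)) : Fin (n+1) → H) with hF
  have hinj : ∀ a ∈ (Finset.univ : Finset (Fin n → κ)), ∀ b ∈ Finset.univ,
      (Sum.inl ∘ a : Fin n → κ ⊕ κ') = Sum.inl ∘ b → a = b := by
    intro a _ b _ h
    funext i
    have := congrFun h i
    simpa using this
  have h2 : ∑ J : Fin n → κ, F (Sum.inl ∘ J)
      = ∑ J' ∈ Finset.univ.image (fun (J : Fin n → κ) => (Sum.inl ∘ J : Fin n → κ ⊕ κ')), F J' :=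
    (Finset.sum_image hinj).symm
  have h3 : ∑ J' ∈ Finset.univ.image (fun (J : Fin n → κ) => (Sum.inl ∘ J : Fin n → κ ⊕ κ')),
      F J' = ∑ J' : Fin n → κ ⊕ κ', F J' := by
    apply Finset.sum_subset (Finset.subset_univ _)
    intro J _ hJ
    have hex : ∃ (i₀ : Fin n) (x : κ'), J i₀ = Sum.inr x := by
      by_contra hc
      push_neg at hc
      apply hJ
      have hall : ∀ i, ∃ y, J i = Sum.inl y := by
        intro i
        cases h' : J i with
        | inl y => exact ⟨y, rfl⟩
        | inr x => exact absurd h' (hc i x)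
      refine Finset.mem_image.2 ⟨fun i => (hall i).choose, Finset.mem_univ _, ?_⟩
      funext i
      simp [(hall i).choose_spec.symm]
    obtain ⟨i₀, x, hx⟩ := hex
    have hzero : (List.ofFn fun i => Sum.elim (P i) (0 : κ' → H) (J i)).prod = 0 := by
      apply List.prod_eq_zero
      rw [List.mem_ofFn]
      exact ⟨i₀, by simp [hx]⟩
    rw [hF]
    dsimp only
    rw [hzero, map_zero]
    exact MultilinearMap.map_coord_zero _ (0 : Fin (n+1)) (by simp)
  rw [← h3, ← h2]
  refine Finset.sum_congr rfl fun J _ => ?_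
  simp [hF]

private lemma ofFn_rev {α : Type*} {n : ℕ} (g : Fin n → α) :
    List.ofFn (fun i => g (Fin.rev i)) = (List.ofFn g).reverse := by
  apply List.ext_getElem
  · simp
  · intro i h1 h2
    rw [List.getElem_reverse]
    simp only [List.getElem_ofFn, List.length_ofFn]
    congr 1
    ext
    simp [Fin.val_rev]
    omega

private lemma shape_pad_right {n : ℕ} (f : H →ₗ[k] H) {κ κ' : Type} [Fintype κ] [Fintype κ']
    (P Q : Fin n → κ → H) :
    shape n f (fun i => Sum.elim (0 : κ' → H) (P i)) (fun i => Sum.elim 0 (Q i))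
      = shape n f P Q := by
  classical
  unfold shape
  set F : (Fin n → κ' ⊕ κ) → ⨂[k] (_ : Fin (n+1)), H := fun J =>
    tprod k (Fin.cons (f ((List.ofFn fun i => Sum.elim (0 : κ' → H) (P i) (J i)).prod))
      (fun i => Sum.elim 0 (Q i) (J i)) : Fin (n+1) → H) with hF
  have hinj : ∀ a ∈ (Finset.univ : Finset (Fin n → κ)), ∀ b ∈ Finset.univ,
      (Sum.inr ∘ a : Fin n → κ' ⊕ κ) = Sum.inr ∘ b → a = b := by
    intro a _ b _ h
    funext i
    have := congrFun h i
    simpa using this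
  have h2 : ∑ J : Fin n → κ, F (Sum.inr ∘ J)
      = ∑ J' ∈ Finset.univ.image (fun (J : Fin n → κ) => (Sum.inr ∘ J : Fin n → κ' ⊕ κ)), F J' :=
    (Finset.sum_image hinj).symm
  have h3 : ∑ J' ∈ Finset.univ.image (fun (J : Fin n → κ) => (Sum.inr ∘ J : Fin n → κ' ⊕ κ)),
      F J' = ∑ J' : Fin n → κ' ⊕ κ, F J' := by
    apply Finset.sum_subset (Finset.subset_univ _)
    intro J _ hJ
    have hex : ∃ (i₀ : Fin n) (x : κ'), J i₀ = Sum.inl x := by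
      by_contra hc
      push_neg at hc
      apply hJ
      have hall : ∀ i, ∃ y, J i = Sum.inr y := by
        intro i
        cases h' : J i with
        | inr y => exact ⟨y, rfl⟩
        | inl x => exact absurd h' (hc i x)
      refine Finset.mem_image.2 ⟨fun i => (hall i).choose, Finset.mem_univ _, ?_⟩
      funext i
      simp [(hall i).choose_spec.symm]
    obtain ⟨i₀, x, hx⟩ := hex
    have hzero : (List.ofFn fun i => Sum.elim (0 : κ' → H) (P i) (J i)).prod = 0 := by
      apply List.prod_eq_zero
      rw [List.mem_ofFn]
      exact ⟨i₀, by simp [hx]⟩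
    rw [hF]
    dsimp only
    rw [hzero, map_zero]
    exact MultilinearMap.map_coord_zero _ (0 : Fin (n+1)) (by simp)
  rw [← h3, ← h2]
  refine Finset.sum_congr rfl fun J _ => ?_
  simp [hF]


private lemma comul_antipode_map
    (comul : H →ₗ[k] H ⊗[k] H) (counit : H →ₗ[k] k) (S : H →ₗ[k] H)
    (hcoassoc : ∀ h : H,
      (TensorProduct.assoc k H H H) ((TensorProduct.map comul LinearMap.id) (comul h)) =
        (TensorProduct.map LinearMap.id comul) (comul h))
    (hcounit_left : ∀ h : H,
      (TensorProduct.lid k H) ((TensorProduct.map counit LinearMap.id) (comul h)) = h)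
    (hcounit_right : ∀ h : H,
      (TensorProduct.rid k H) ((TensorProduct.map LinearMap.id counit) (comul h)) = h)
    (hcomul_mul : ∀ a b : H, comul (a * b) = comul a * comul b) (hcomul_one : comul 1 = 1)
    (hantipode_left : ∀ h : H,
      (LinearMap.mul' k H) ((TensorProduct.map S LinearMap.id) (comul h)) =
        algebraMap k H (counit h))
    (hantipode_right : ∀ h : H,
      (LinearMap.mul' k H) ((TensorProduct.map LinearMap.id S) (comul h)) =
        algebraMap k H (counit h)) :
    ∀ z : H, comul (S z) = (TensorProduct.comm k H H) ((TensorProduct.map S S) (comul z)) := by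
  set A := H ⊗[k] H with hA
  set conv : (H →ₗ[k] A) → (H →ₗ[k] A) → (H →ₗ[k] A) := fun f g =>
    (LinearMap.mul' k A) ∘ₗ (TensorProduct.map f g) ∘ₗ comul with hconv
  set η : H →ₗ[k] A := (Algebra.linearMap k A) ∘ₗ counit with hη
  set F : H →ₗ[k] A := (TensorProduct.comm k H H).toLinearMap ∘ₗ (TensorProduct.map S S)
    ∘ₗ comul with hF
  -- unit laws
  have hu_left : ∀ f : H →ₗ[k] A, conv η f = f := by
    intro f
    have e1 : (LinearMap.mul' k A) ∘ₗ (TensorProduct.map η f)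
        = f ∘ₗ (TensorProduct.lid k H).toLinearMap ∘ₗ (TensorProduct.map counit LinearMap.id) := by
      apply TensorProduct.ext'
      intro a b
      simp only [LinearMap.comp_apply, TensorProduct.map_tmul, LinearMap.mul'_apply, hη,
        Algebra.linearMap_apply, LinearMap.id_coe, id_eq, LinearEquiv.coe_coe,
        TensorProduct.lid_tmul, map_smul]
      rw [← Algebra.smul_def]
    apply LinearMap.ext
    intro x
    have := congrArg (fun L : H ⊗[k] H →ₗ[k] A => L (comul x)) e1
    simp only [LinearMap.comp_apply] at this ⊢
    simp only [hconv, LinearMap.comp_apply]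
    rw [this]
    simp only [LinearEquiv.coe_coe]
    rw [hcounit_left x]
  have hu_right : ∀ f : H →ₗ[k] A, conv f η = f := by
    intro f
    have e1 : (LinearMap.mul' k A) ∘ₗ (TensorProduct.map f η)
        = f ∘ₗ (TensorProduct.rid k H).toLinearMap ∘ₗ (TensorProduct.map LinearMap.id counit) := by
      apply TensorProduct.ext'
      intro a b
      simp only [LinearMap.comp_apply, TensorProduct.map_tmul, LinearMap.mul'_apply, hη,
        Algebra.linearMap_apply, LinearMap.id_coe, id_eq, LinearEquiv.coe_coe,
        TensorProduct.rid_tmul, map_smul]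
      rw [← Algebra.commutes, ← Algebra.smul_def]
    apply LinearMap.ext
    intro x
    have := congrArg (fun L : H ⊗[k] H →ₗ[k] A => L (comul x)) e1
    simp only [LinearMap.comp_apply] at this ⊢
    simp only [hconv, LinearMap.comp_apply]
    rw [this]
    simp only [LinearEquiv.coe_coe]
    rw [hcounit_right x]
  -- associativity
  have hassoc : ∀ f g e : H →ₗ[k] A, conv (conv f g) e = conv f (conv g e) := by
    intro f g e
    apply LinearMap.ext
    intro x
    have h1 : TensorProduct.map (conv f g) e
        = (TensorProduct.map ((LinearMap.mul' k A) ∘ₗ TensorProduct.map f g) e)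
          ∘ₗ (TensorProduct.map comul LinearMap.id) := by
      rw [← TensorProduct.map_comp]
      simp [hconv, LinearMap.comp_assoc]
    have h2 : TensorProduct.map f (conv g e)
        = (TensorProduct.map f ((LinearMap.mul' k A) ∘ₗ TensorProduct.map g e))
          ∘ₗ (TensorProduct.map LinearMap.id comul) := by
      rw [← TensorProduct.map_comp]
      simp [hconv, LinearMap.comp_assoc]
    have h3 : ((LinearMap.mul' k A) ∘ₗ (TensorProduct.map f ((LinearMap.mul' k A)
          ∘ₗ TensorProduct.map g e))) ∘ₗ (TensorProduct.assoc k H H H).toLinearMap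
        = (LinearMap.mul' k A) ∘ₗ (TensorProduct.map ((LinearMap.mul' k A)
          ∘ₗ TensorProduct.map f g) e) := by
      apply TensorProduct.ext_threefold
      intro a b c
      simp [mul_assoc]
    simp only [hconv, LinearMap.comp_apply]
    rw [h1, h2]
    simp only [LinearMap.comp_apply]
    rw [← hcoassoc x]
    have := congrArg (fun L : (H ⊗[k] H) ⊗[k] H →ₗ[k] A =>
      L ((TensorProduct.map comul LinearMap.id) (comul x))) h3
    simp only [LinearMap.comp_apply, LinearEquiv.coe_coe] at this
    rw [this]
  -- c3
  have hc3 : conv (comul ∘ₗ S) comul = η := by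
    apply LinearMap.ext
    intro x
    have e1 : (LinearMap.mul' k A) ∘ₗ (TensorProduct.map (comul ∘ₗ S) comul)
        = comul ∘ₗ (LinearMap.mul' k H) ∘ₗ (TensorProduct.map S LinearMap.id) := by
      apply TensorProduct.ext'
      intro a b
      simp only [LinearMap.comp_apply, TensorProduct.map_tmul, LinearMap.mul'_apply,
        LinearMap.id_coe, id_eq]
      rw [hcomul_mul]
    simp only [hconv, LinearMap.comp_apply]
    have := congrArg (fun L : H ⊗[k] H →ₗ[k] A => L (comul x)) e1
    simp only [LinearMap.comp_apply] at this
    rw [this, hantipode_left x]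
    simp only [hη, LinearMap.comp_apply, Algebra.linearMap_apply]
    rw [Algebra.algebraMap_eq_smul_one, map_smul, hcomul_one,
      ← Algebra.algebraMap_eq_smul_one]
  -- pieces for c4
  set βm : H ⊗[k] H →ₗ[k] H := (LinearMap.mul' k H) ∘ₗ (TensorProduct.map LinearMap.id S)
    with hβm
  set f3 : H →ₗ[k] H ⊗[k] (H ⊗[k] H) := (TensorProduct.map LinearMap.id comul) ∘ₗ comul
    with hf3
  set e3 : H →ₗ[k] (H ⊗[k] H) ⊗[k] H := (TensorProduct.map comul LinearMap.id) ∘ₗ comul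
    with he3
  have hsmall : e3 = (TensorProduct.assoc k H H H).symm.toLinearMap ∘ₗ f3 := by
    apply LinearMap.ext
    intro h
    simp only [he3, hf3, LinearMap.comp_apply, LinearEquiv.coe_coe]
    rw [LinearEquiv.eq_symm_apply]
    exact hcoassoc h
  set ν : H →ₗ[k] A := (TensorProduct.mk k H H).flip 1 with hν
  have hνapp : ∀ h : H, ν h = h ⊗ₜ[k] 1 := fun h => rfl
  -- c4
  have hc4 : conv comul F = η := by
    apply LinearMap.ext
    intro x
    -- step 1: unfold to map comul comul
    have s1 : TensorProduct.map comul F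
        = (TensorProduct.map LinearMap.id
            ((TensorProduct.comm k H H).toLinearMap ∘ₗ TensorProduct.map S S))
          ∘ₗ (TensorProduct.map comul comul) := by
      rw [← TensorProduct.map_comp, LinearMap.id_comp, hF, LinearMap.comp_assoc]
    have s2 : TensorProduct.map comul comul
        = (TensorProduct.map comul (LinearMap.id : H ⊗[k] H →ₗ[k] H ⊗[k] H))
          ∘ₗ (TensorProduct.map LinearMap.id comul) := by
      rw [← TensorProduct.map_comp, LinearMap.comp_id, LinearMap.id_comp]
    -- naturality of assoc
    have s4 : (TensorProduct.map comul (LinearMap.id : H ⊗[k] H →ₗ[k] H ⊗[k] H))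
          ∘ₗ (TensorProduct.assoc k H H H).toLinearMap
        = (TensorProduct.assoc k (H ⊗[k] H) H H).toLinearMap
          ∘ₗ (TensorProduct.map (TensorProduct.map comul LinearMap.id) LinearMap.id) := by
      apply TensorProduct.ext_threefold
      intro a b c
      simp
    -- ground key
    have s6 : (LinearMap.mul' k A)
          ∘ₗ (TensorProduct.map LinearMap.id
              ((TensorProduct.comm k H H).toLinearMap ∘ₗ TensorProduct.map S S))
          ∘ₗ (TensorProduct.assoc k (H ⊗[k] H) H H).toLinearMap
          ∘ₗ (TensorProduct.map (TensorProduct.assoc k H H H).symm.toLinearMap LinearMap.id)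
        = (TensorProduct.map βm LinearMap.id)
          ∘ₗ (TensorProduct.assoc k H H H).symm.toLinearMap
          ∘ₗ (TensorProduct.map LinearMap.id (TensorProduct.comm k H H).toLinearMap)
          ∘ₗ (TensorProduct.assoc k H H H).toLinearMap
          ∘ₗ (TensorProduct.map (TensorProduct.map LinearMap.id βm) LinearMap.id) := by
      apply TensorProduct.ext'
      intro t c
      induction t using TensorProduct.induction_on with
      | zero =>
        rw [TensorProduct.zero_tmul]
        simp only [map_zero]
      | add t1 t2 h1 h2 =>
        rw [TensorProduct.add_tmul]
        simp only [map_add, h1, h2]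
      | tmul y1 w =>
        induction w using TensorProduct.induction_on with
        | zero =>
          rw [TensorProduct.tmul_zero, TensorProduct.zero_tmul]
          simp only [map_zero]
        | add w1 w2 h1 h2 =>
          rw [TensorProduct.tmul_add, TensorProduct.add_tmul]
          simp only [map_add, h1, h2]
        | tmul y2 y3 =>
          simp only [LinearMap.comp_apply, TensorProduct.map_tmul, LinearMap.id_coe, id_eq,
            LinearEquiv.coe_coe, TensorProduct.assoc_symm_tmul, TensorProduct.assoc_tmul,
            TensorProduct.comm_tmul, LinearMap.mul'_apply, hβm,
            Algebra.TensorProduct.tmul_mul_tmul]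
          rw [Algebra.TensorProduct.tmul_mul_tmul]
    -- assemble: value form
    have e56 : (TensorProduct.map (TensorProduct.map comul LinearMap.id) LinearMap.id)
          ((TensorProduct.map comul LinearMap.id) (comul x))
        = (TensorProduct.map (TensorProduct.assoc k H H H).symm.toLinearMap LinearMap.id)
          ((TensorProduct.map f3 LinearMap.id) (comul x)) := by
      have e5 : (TensorProduct.map (TensorProduct.map comul LinearMap.id) LinearMap.id)
            ∘ₗ (TensorProduct.map comul (LinearMap.id : H →ₗ[k] H))
          = (TensorProduct.map (TensorProduct.assoc k H H H).symm.toLinearMap LinearMap.id)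
            ∘ₗ (TensorProduct.map f3 LinearMap.id) := by
        rw [← TensorProduct.map_comp, ← TensorProduct.map_comp, LinearMap.comp_id,
          ← he3, hsmall]
      have := congrArg (fun L : H ⊗[k] H →ₗ[k] ((H ⊗[k] H) ⊗[k] H) ⊗[k] H => L (comul x)) e5
      simpa only [LinearMap.comp_apply] using this
    have v1 : conv comul F x
        = (LinearMap.mul' k A)
            ((TensorProduct.map LinearMap.id
              ((TensorProduct.comm k H H).toLinearMap ∘ₗ TensorProduct.map S S))
            ((TensorProduct.assoc k (H ⊗[k] H) H H)
            ((TensorProduct.map (TensorProduct.assoc k H H H).symm.toLinearMap LinearMap.id)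
            ((TensorProduct.map f3 LinearMap.id) (comul x))))) := by
      simp only [hconv, LinearMap.comp_apply]
      rw [s1]
      simp only [LinearMap.comp_apply]
      rw [s2]
      simp only [LinearMap.comp_apply]
      rw [show (TensorProduct.map LinearMap.id comul) (comul x) =
        (TensorProduct.assoc k H H H) ((TensorProduct.map comul LinearMap.id) (comul x)) from
        (hcoassoc x).symm]
      have := congrArg (fun L : (H ⊗[k] H) ⊗[k] H →ₗ[k] (H ⊗[k] H) ⊗[k] (H ⊗[k] H) =>
        L ((TensorProduct.map comul LinearMap.id) (comul x))) s4
      simp only [LinearMap.comp_apply, LinearEquiv.coe_coe] at this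
      rw [this, e56]
    rw [v1]
    have := congrArg (fun L : (H ⊗[k] (H ⊗[k] H)) ⊗[k] H →ₗ[k] A =>
      L ((TensorProduct.map f3 LinearMap.id) (comul x))) s6
    simp only [LinearMap.comp_apply, LinearEquiv.coe_coe] at this
    rw [this]
    -- now collapse the middle pair
    have s7 : (TensorProduct.map (TensorProduct.map LinearMap.id βm) LinearMap.id)
          ∘ₗ (TensorProduct.map f3 (LinearMap.id : H →ₗ[k] H))
        = TensorProduct.map ν LinearMap.id := by
      rw [← TensorProduct.map_comp, LinearMap.comp_id]
      congr 1
      -- (map id βm) ∘ f3 = ν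
      have e7 : (TensorProduct.map LinearMap.id βm) ∘ₗ f3
          = (TensorProduct.map LinearMap.id (βm ∘ₗ comul)) ∘ₗ comul := by
        rw [hf3, ← LinearMap.comp_assoc, ← TensorProduct.map_comp, LinearMap.id_comp]
      have e8 : βm ∘ₗ comul = (Algebra.linearMap k H) ∘ₗ counit := by
        apply LinearMap.ext
        intro h
        simpa [hβm] using hantipode_right h
      have e9 : (TensorProduct.map (LinearMap.id : H →ₗ[k] H)
            ((Algebra.linearMap k H) ∘ₗ counit)) ∘ₗ comul = ν := by
        have e10 : TensorProduct.map (LinearMap.id : H →ₗ[k] H)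
              ((Algebra.linearMap k H) ∘ₗ counit)
            = (ν ∘ₗ (TensorProduct.rid k H).toLinearMap)
              ∘ₗ (TensorProduct.map LinearMap.id counit) := by
          apply TensorProduct.ext'
          intro a c
          simp only [LinearMap.comp_apply, TensorProduct.map_tmul, LinearMap.id_coe, id_eq,
            LinearEquiv.coe_coe, TensorProduct.rid_tmul, Algebra.linearMap_apply, map_smul,
            hνapp]
          rw [Algebra.algebraMap_eq_smul_one, TensorProduct.tmul_smul,
            TensorProduct.smul_tmul']
        apply LinearMap.ext
        intro h
        rw [e10]
        simp only [LinearMap.comp_apply, LinearEquiv.coe_coe]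
        rw [hcounit_right h]
      rw [e7, e8, e9]
    have := congrArg (fun L : H ⊗[k] H →ₗ[k] (H ⊗[k] H) ⊗[k] H =>
      L (comul x)) s7
    simp only [LinearMap.comp_apply] at this
    rw [this]
    -- final ground computation
    have s8 : (TensorProduct.map βm LinearMap.id)
          ∘ₗ (TensorProduct.assoc k H H H).symm.toLinearMap
          ∘ₗ (TensorProduct.map LinearMap.id (TensorProduct.comm k H H).toLinearMap)
          ∘ₗ (TensorProduct.assoc k H H H).toLinearMap
          ∘ₗ (TensorProduct.map ν LinearMap.id)
        = ν ∘ₗ βm := by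
      apply TensorProduct.ext'
      intro a c
      simp only [LinearMap.comp_apply, TensorProduct.map_tmul, LinearMap.id_coe, id_eq,
        hνapp, LinearEquiv.coe_coe, TensorProduct.assoc_tmul, TensorProduct.comm_tmul,
        TensorProduct.assoc_symm_tmul]
    have := congrArg (fun L : H ⊗[k] H →ₗ[k] A => L (comul x)) s8
    simp only [LinearMap.comp_apply, LinearEquiv.coe_coe] at this
    rw [this]
    rw [show βm (comul x) = algebraMap k H (counit x) from by
      simpa [hβm] using hantipode_right x]
    rw [hνapp, hη]
    simp only [LinearMap.comp_apply, Algebra.linearMap_apply]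
    rw [Algebra.TensorProduct.algebraMap_apply]
  -- conclude
  have hfinal : comul ∘ₗ S = F := by
    calc comul ∘ₗ S = conv (comul ∘ₗ S) η := (hu_right _).symm
      _ = conv (comul ∘ₗ S) (conv comul F) := by rw [hc4]
      _ = conv (conv (comul ∘ₗ S) comul) F := (hassoc _ _ _).symm
      _ = conv η F := by rw [hc3]
      _ = F := hu_left F
  intro z
  have := LinearMap.congr_fun hfinal z
  simpa [hF] using this

private lemma comm_comm' (z : H ⊗[k] H) :
    (TensorProduct.comm k H H) ((TensorProduct.comm k H H) z) = z := by
  induction z using TensorProduct.induction_on with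
  | zero => simp
  | tmul a b => simp
  | add z1 z2 h1 h2 => simp [h1, h2]

private lemma map_comm' (f g : H →ₗ[k] H) (z : H ⊗[k] H) :
    (TensorProduct.map f g) ((TensorProduct.comm k H H) z)
      = (TensorProduct.comm k H H) ((TensorProduct.map g f) z) := by
  induction z using TensorProduct.induction_on with
  | zero => simp
  | tmul a b => simp
  | add z1 z2 h1 h2 => simp [h1, h2]

private lemma comul_Sinv_map
    (comul : H →ₗ[k] H ⊗[k] H) (counit : H →ₗ[k] k) (S Sinv : H →ₗ[k] H)
    (hcoassoc : ∀ h : H,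
      (TensorProduct.assoc k H H H) ((TensorProduct.map comul LinearMap.id) (comul h)) =
        (TensorProduct.map LinearMap.id comul) (comul h))
    (hcounit_left : ∀ h : H,
      (TensorProduct.lid k H) ((TensorProduct.map counit LinearMap.id) (comul h)) = h)
    (hcounit_right : ∀ h : H,
      (TensorProduct.rid k H) ((TensorProduct.map LinearMap.id counit) (comul h)) = h)
    (hcomul_mul : ∀ a b : H, comul (a * b) = comul a * comul b) (hcomul_one : comul 1 = 1)
    (hantipode_left : ∀ h : H,
      (LinearMap.mul' k H) ((TensorProduct.map S LinearMap.id) (comul h)) =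
        algebraMap k H (counit h))
    (hantipode_right : ∀ h : H,
      (LinearMap.mul' k H) ((TensorProduct.map LinearMap.id S) (comul h)) =
        algebraMap k H (counit h))
    (hSinvS : ∀ h, Sinv (S h) = h) (hSSinv : ∀ h, S (Sinv h) = h) :
    ∀ y : H, comul (Sinv y)
      = (TensorProduct.comm k H H) ((TensorProduct.map Sinv Sinv) (comul y)) := by
  have hS := comul_antipode_map comul counit S hcoassoc hcounit_left hcounit_right
    hcomul_mul hcomul_one hantipode_left hantipode_right
  intro y
  have h1 : comul y = (TensorProduct.comm k H H)
      ((TensorProduct.map S S) (comul (Sinv y))) := by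
    have := hS (Sinv y)
    rw [hSSinv y] at this
    exact this
  rw [h1, map_comm', comm_comm']
  have h2 : (TensorProduct.map Sinv Sinv) ((TensorProduct.map S S) (comul (Sinv y)))
      = comul (Sinv y) := by
    have : (TensorProduct.map Sinv Sinv) ∘ₗ (TensorProduct.map S S)
        = TensorProduct.map (Sinv ∘ₗ S) (Sinv ∘ₗ S) := (TensorProduct.map_comp _ _ _ _).symm
    have h3 : Sinv ∘ₗ S = LinearMap.id := LinearMap.ext hSinvS
    have := congrArg (fun L : H ⊗[k] H →ₗ[k] H ⊗[k] H => L (comul (Sinv y))) this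
    simp only [LinearMap.comp_apply] at this
    rw [this, h3]
    simp
  rw [h2]

private lemma counit_one'
    (comul : H →ₗ[k] H ⊗[k] H) (counit : H →ₗ[k] k)
    (hcounit_left : ∀ h : H,
      (TensorProduct.lid k H) ((TensorProduct.map counit LinearMap.id) (comul h)) = h)
    (hcomul_one : comul 1 = 1) (h10 : (1 : H) ≠ 0) :
    counit 1 = 1 := by
  have hinj : Function.Injective (algebraMap k H) := by
    haveI : Nontrivial H := nontrivial_of_ne 1 0 h10
    exact (algebraMap k H).injective
  apply hinj
  have := hcounit_left 1
  rw [hcomul_one, Algebra.TensorProduct.one_def] at this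
  simp only [TensorProduct.map_tmul, LinearMap.id_coe, id_eq, TensorProduct.lid_tmul] at this
  rw [RingHom.map_one, Algebra.algebraMap_eq_smul_one]
  exact this

private lemma counit_mul'
    (comul : H →ₗ[k] H ⊗[k] H) (counit : H →ₗ[k] k) (S : H →ₗ[k] H)
    (hcomul_mul : ∀ a b : H, comul (a * b) = comul a * comul b)
    (hantipode_left : ∀ h : H,
      (LinearMap.mul' k H) ((TensorProduct.map S LinearMap.id) (comul h)) =
        algebraMap k H (counit h))
    (hSanti : ∀ a b : H, S (a * b) = S b * S a)
    (h10 : (1 : H) ≠ 0) :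
    ∀ a b : H, counit (a * b) = counit a * counit b := by
  have hinj : Function.Injective (algebraMap k H) := by
    haveI : Nontrivial H := nontrivial_of_ne 1 0 h10
    exact (algebraMap k H).injective
  set φ : H ⊗[k] H →ₗ[k] H := (LinearMap.mul' k H) ∘ₗ (TensorProduct.map S LinearMap.id)
    with hφ
  have hφc : ∀ x : H, φ (comul x) = algebraMap k H (counit x) := fun x => hantipode_left x
  have hsub : ∀ (p q : H) (z : H ⊗[k] H), φ (z * (p ⊗ₜ[k] q)) = S p * φ z * q := by
    intro p q z
    induction z using TensorProduct.induction_on with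
    | zero => simp
    | tmul z1 z2 =>
      simp only [hφ, Algebra.TensorProduct.tmul_mul_tmul, LinearMap.comp_apply,
        TensorProduct.map_tmul, LinearMap.mul'_apply, LinearMap.id_coe, id_eq, hSanti]
      rw [mul_assoc, mul_assoc, mul_assoc]
    | add z1 z2 h1 h2 =>
      rw [add_mul, map_add, h1, h2, map_add, mul_add, add_mul]
  have key : ∀ (a : H) (z : H ⊗[k] H), φ (comul a * z) = counit a • φ z := by
    intro a z
    induction z using TensorProduct.induction_on with
    | zero => simp
    | tmul p q =>
      rw [hsub, hφc a]
      simp only [hφ, LinearMap.comp_apply, TensorProduct.map_tmul, LinearMap.mul'_apply,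
        LinearMap.id_coe, id_eq]
      rw [Algebra.smul_def, ← mul_assoc, ← Algebra.commutes (counit a) (S p), mul_assoc]
    | add z1 z2 h1 h2 =>
      rw [mul_add, map_add, h1, h2, map_add, smul_add]
  intro a b
  apply hinj
  rw [← hφc (a * b), hcomul_mul, key a (comul b), hφc b, Algebra.smul_def, _root_.map_mul]

private lemma list_prod_st (st : H → H)
    (hst_mul : ∀ a b : H, st (a * b) = st a * st b) (hst_one : st 1 = 1) :
    ∀ l : List H, st l.prod = (l.map st).prod := by
  intro l
  induction l with
  | nil => simpa using hst_one
  | cons a l ih => simp [hst_mul, ih]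

private lemma list_counit (comul : H →ₗ[k] H ⊗[k] H) (counit : H →ₗ[k] k)
    (hεone : counit 1 = 1)
    (hεmul : ∀ a b : H, counit (a * b) = counit a * counit b) :
    ∀ l : List H, counit l.prod = (l.map counit).prod := by
  intro l
  induction l with
  | nil => simpa using hεone
  | cons a l ih => simp [hεmul, ih]

private lemma list_S_rev (S Sinv : H →ₗ[k] H)
    (hSanti : ∀ a b : H, S (a * b) = S b * S a)
    (hSSinv : ∀ h, S (Sinv h) = h) (hS1 : S 1 = 1) :
    ∀ l : List H, S ((l.map Sinv).reverse.prod) = l.prod := by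
  intro l
  induction l with
  | nil => simpa using hS1
  | cons a l ih =>
    rw [List.map_cons, List.reverse_cons, List.prod_append, List.prod_cons, List.prod_nil,
      mul_one, hSanti, hSSinv, List.prod_cons, ih]

private lemma list_smul_prod {n : ℕ} (c : Fin n → k) (g : Fin n → H) :
    (List.ofFn fun i => c i • g i).prod = (∏ i, c i) • (List.ofFn g).prod := by
  induction n with
  | zero => simp
  | succ d ih =>
    rw [List.ofFn_succ, List.ofFn_succ, List.prod_cons, List.prod_cons, ih,
      Fin.prod_univ_succ, smul_mul_assoc, mul_smul_comm, smul_smul]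


private lemma tprod_cons_smul {n : ℕ} (c : k) (h : H) (t : Fin n → H) :
    tprod k (Fin.cons (c • h) t : Fin (n + 1) → H)
      = c • tprod k (Fin.cons h t : Fin (n + 1) → H) := by
  have hc : ∀ z : H, (Fin.cons z t : Fin (n+1) → H)
      = Function.update (Fin.cons 0 t) 0 z := fun z => (Fin.update_cons_zero _ _ _).symm
  rw [hc (c • h), MultilinearMap.map_update_smul, Fin.update_cons_zero]

private lemma fin_neg_succ {n : ℕ} (i : Fin n) :
    (-(i.succ) : Fin (n + 1)) = (Fin.rev i).succ := by
  have hi := i.isLt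
  ext
  rw [Fin.coe_neg, Fin.val_succ, Fin.val_succ, Fin.val_rev]
  have h2 : n + 1 - (↑i + 1) < n + 1 := by omega
  rw [Nat.mod_eq_of_lt h2]
  omega


end ShapeHelpers

variable {k H : Type*}

theorem theta_intertwines_involutions
    [Field k] [StarRing k] [CharZero k]
    [Ring H] [Algebra k H]
    (comul : H →ₗ[k] H ⊗[k] H) (counit : H →ₗ[k] k) (S Sinv : H →ₗ[k] H)
    (st : H → H) (σ σi : H)
    -- Hopf algebra axioms:
    (hcoassoc : ∀ h : H,
      (TensorProduct.assoc k H H H) ((TensorProduct.map comul LinearMap.id) (comul h)) =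
        (TensorProduct.map LinearMap.id comul) (comul h))
    (hcounit_left : ∀ h : H,
      (TensorProduct.lid k H) ((TensorProduct.map counit LinearMap.id) (comul h)) = h)
    (hcounit_right : ∀ h : H,
      (TensorProduct.rid k H) ((TensorProduct.map LinearMap.id counit) (comul h)) = h)
    (hcomul_mul : ∀ a b : H, comul (a * b) = comul a * comul b) (hcomul_one : comul 1 = 1)
    (hantipode_left : ∀ h : H,
      (LinearMap.mul' k H) ((TensorProduct.map S LinearMap.id) (comul h)) =
        algebraMap k H (counit h))
    (hantipode_right : ∀ h : H,
      (LinearMap.mul' k H) ((TensorProduct.map LinearMap.id S) (comul h)) =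
        algebraMap k H (counit h))
    (hSanti : ∀ a b : H, S (a * b) = S b * S a)
    (hSinvS : ∀ h, Sinv (S h) = h) (hSSinv : ∀ h, S (Sinv h) = h)
    -- the *-coalgebra structure: * is a multiplicative, conjugate-linear involution of the
    -- coalgebra (Δ(h*) = h_(2)* ⊗ h_(1)* is imposed representation-wise below):
    (hst_add : ∀ a b : H, st (a + b) = st a + st b)
    (hst_smul : ∀ (c : k) (a : H), st (c • a) = star c • st a)
    (hst_mul : ∀ a b : H, st (a * b) = st a * st b) (hst_one : st 1 = 1)
    (hst_inv : ∀ a : H, st (st a) = a)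
    (hcounit_st : ∀ a : H, counit (st a) = star (counit a))
    (hSst2 : ∀ a : H, S (st (S (st a))) = a)
    -- σ is group-like with σ* = σ⁻¹ and S_σ² = Id:
    (hσgrouplike : comul σ = σ ⊗ₜ[k] σ) (hεσ : counit σ = 1)
    (hσ : σ * σi = 1) (hσ' : σi * σ = 1) (hstσ : st σ = σi)
    (hSσ2 : ∀ h : H, σ * S (σ * S h) = h)
    (ι : Type) (_ : Fintype ι)
    -- the *-coalgebra axiom Δ(x*) = x_(2)* ⊗ x_(1)*, representation-wise:
    (hΔst : ∀ (x : H) (u v : ι → H), comul x = ∑ j : ι, u j ⊗ₜ[k] v j →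
      comul (st x) = ∑ j : ι, st (v j) ⊗ₜ[k] st (u j))
    -- the data: an elementary tensor h^1 ⊗ ... ⊗ h^n with Sweedler representations of the
    -- coproducts and of the iterated coproducts appearing in θ ∘ ω:
    (n : ℕ) (h : Fin n → H) (u v : Fin n → ι → H)
    (hrep : ∀ i, comul (h i) = ∑ j : ι, u i j ⊗ₜ[k] v i j)
    (A B : Fin n → ι → ι → H)
    (hrep2 : ∀ (i : Fin n) (j : ι),
      comul (Sinv (st (v i j))) = ∑ l : ι, A i j l ⊗ₜ[k] B i j l) :
    -- ω_n (θ (h^1⊗...⊗h^n)) = θ (ω_n (h^1⊗...⊗h^n)) in H^⊗(n+1):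
    (∑ J : Fin n → ι,
      tprod k (fun j : Fin (n + 1) =>
        st (S ((Fin.cons (σ * S ((List.ofFn fun i => u i (J i)).prod))
          (fun i => v i (J i)) : Fin (n + 1) → H) (-j))))) =
    (∑ J : Fin n → ι, ∑ L : Fin n → ι,
      (counit ((List.ofFn fun i => st (u i (J i))).prod)) •
        tprod k (Fin.cons
          (σ * S ((List.ofFn fun i => A (Fin.rev i) (J (Fin.rev i)) (L i)).prod))
          (fun i => B (Fin.rev i) (J (Fin.rev i)) (L i)) : Fin (n + 1) → H)) := by
  classical
  by_cases h10 : (1 : H) = 0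
  · haveI : Subsingleton H := subsingleton_of_zero_eq_one h10.symm
    have hz : ∀ g : Fin (n + 1) → H, PiTensorProduct.tprod k g = 0 := fun g =>
      (PiTensorProduct.tprod k).map_coord_zero (0 : Fin (n + 1)) (Subsingleton.elim _ _)
    simp [hz]
  -- derived scalar facts
  have hεone : counit 1 = 1 := counit_one' comul counit hcounit_left hcomul_one h10
  have hεmul : ∀ a b : H, counit (a * b) = counit a * counit b :=
    counit_mul' comul counit S hcomul_mul hantipode_left hSanti h10
  -- derived element facts
  have hSinvdef : ∀ a : H, st (S (st a)) = Sinv a := by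
    intro a
    have h1 := congrArg Sinv (hSst2 a)
    rwa [hSinvS] at h1
  have hstS : ∀ a : H, st (S a) = Sinv (st a) := by
    intro a
    conv_lhs => rw [← hst_inv a]
    exact hSinvdef (st a)
  have hstσi : st σi = σ := by rw [← hstσ, hst_inv]
  have hstHead : ∀ z : H, st (S (σ * S z)) = σ * st z := by
    intro z
    have h5 : S (σ * S z) = σi * z := by
      have h6 := congrArg (fun y => σi * y) (hSσ2 z)
      rwa [← mul_assoc, hσ', one_mul] at h6
    rw [h5, hst_mul, hstσi]
  have hS1 : S 1 = 1 := by
    have h7 := hantipode_left 1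
    rw [hcomul_one, Algebra.TensorProduct.one_def] at h7
    simp only [TensorProduct.map_tmul, LinearMap.id_coe, id_eq, LinearMap.mul'_apply,
      mul_one] at h7
    rw [h7, Algebra.algebraMap_eq_smul_one, hεone, one_smul]
  have hSinvcomul : ∀ y : H, comul (Sinv y)
      = (TensorProduct.comm k H H) ((TensorProduct.map Sinv Sinv) (comul y)) :=
    comul_Sinv_map comul counit S Sinv hcoassoc hcounit_left hcounit_right hcomul_mul
      hcomul_one hantipode_left hantipode_right hSinvS hSSinv
  have hΔx : ∀ i : Fin n, comul (st (h i)) = ∑ j : ι, st (v i j) ⊗ₜ[k] st (u i j) :=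
    fun i => hΔst (h i) (u i) (v i) (hrep i)
  set f₁ : H →ₗ[k] H := (LinearMap.mulLeft k σ) ∘ₗ S with hf₁
  have hf₁app : ∀ z : H, f₁ z = σ * S z := fun z => rfl
  -- counit collapse
  have hcol : ∀ i : Fin n, (∑ j : ι, counit (st (u i j)) • st (v i j)) = st (h i) := by
    intro i
    have h8 := hcounit_right (st (h i))
    rw [hΔx i, map_sum, map_sum] at h8
    simp only [TensorProduct.map_tmul, LinearMap.id_coe, id_eq, TensorProduct.rid_tmul] at h8
    exact h8
  -- the two shape families
  set Ph : Fin n → ι × ι → H :=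
    fun i p => counit (st (u (Fin.rev i) p.1)) • A (Fin.rev i) p.1 p.2 with hPh
  set Qh : Fin n → ι × ι → H := fun i p => B (Fin.rev i) p.1 p.2 with hQh
  set M' : Fin n → ι → H := fun i j => Sinv (st (u (Fin.rev i) j)) with hM'
  set W' : Fin n → ι → H := fun i j => Sinv (st (v (Fin.rev i) j)) with hW'
  -- per-slot tensor identity
  have hzi : ∀ i : Fin n,
      (∑ p : ι × ι, Ph i p ⊗ₜ[k] Qh i p) = ∑ j : ι, M' i j ⊗ₜ[k] W' i j := by
    intro i
    rw [Fintype.sum_prod_type]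
    have step1 : ∀ j : ι, (∑ l : ι, Ph i (j, l) ⊗ₜ[k] Qh i (j, l))
        = counit (st (u (Fin.rev i) j)) • comul (Sinv (st (v (Fin.rev i) j))) := by
      intro j
      rw [hrep2 (Fin.rev i) j, Finset.smul_sum]
      refine Finset.sum_congr rfl fun l _ => ?_
      rw [hPh, hQh]
      dsimp only
      rw [TensorProduct.smul_tmul']
    rw [Finset.sum_congr rfl (fun j _ => step1 j)]
    have step2 : (∑ j : ι, counit (st (u (Fin.rev i) j)) • comul (Sinv (st (v (Fin.rev i) j))))
        = comul (Sinv (st (h (Fin.rev i)))) := by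
      rw [← hcol (Fin.rev i), map_sum, map_sum]
      refine Finset.sum_congr rfl fun j _ => ?_
      rw [map_smul, map_smul]
    rw [step2, hSinvcomul, hΔx (Fin.rev i), map_sum, map_sum]
    refine Finset.sum_congr rfl fun j _ => ?_
    rw [TensorProduct.map_tmul, TensorProduct.comm_tmul, hM', hW']
  -- RHS = shape Ph Qh
  have hRHS : (∑ J : Fin n → ι, ∑ L : Fin n → ι,
      (counit ((List.ofFn fun i => st (u i (J i))).prod)) •
        tprod k (Fin.cons
          (σ * S ((List.ofFn fun i => A (Fin.rev i) (J (Fin.rev i)) (L i)).prod))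
          (fun i => B (Fin.rev i) (J (Fin.rev i)) (L i)) : Fin (n + 1) → H))
      = shape n f₁ Ph Qh := by
    rw [← Finset.sum_product']
    unfold shape
    refine Fintype.sum_bijective
      (fun JL : (Fin n → ι) × (Fin n → ι) => fun i => (JL.1 (Fin.rev i), JL.2 i))
      ?_ _ _ (fun JL => ?_)
    · apply Function.bijective_iff_has_inverse.2
      refine ⟨fun K => (fun i => (K (Fin.rev i)).1, fun i => (K i).2), ?_, ?_⟩
      · intro JL
        ext i
        · simp [Fin.rev_rev]
        · simp
      · intro K
        funext i
        simp [Fin.rev_rev]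
    · obtain ⟨J, L⟩ := JL
      dsimp only
      have hscal : counit ((List.ofFn fun i => st (u i (J i))).prod)
          = ∏ i : Fin n, counit (st (u (Fin.rev i) (J (Fin.rev i)))) := by
        rw [list_counit comul counit hεone hεmul, List.map_ofFn, Fin.prod_ofFn]
        exact (Equiv.prod_comp Fin.revPerm
          (fun i => counit (st (u i (J i))))).symm
      have hPQ : ∀ i : Fin n, Ph i (J (Fin.rev i), L i)
          = counit (st (u (Fin.rev i) (J (Fin.rev i)))) •
              A (Fin.rev i) (J (Fin.rev i)) (L i) := fun i => rfl
      rw [hscal]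
      rw [show (List.ofFn fun i => Ph i (J (Fin.rev i), L i)).prod
          = (∏ i : Fin n, counit (st (u (Fin.rev i) (J (Fin.rev i))))) •
            (List.ofFn fun i => A (Fin.rev i) (J (Fin.rev i)) (L i)).prod from by
        rw [Finset.prod_congr rfl (fun i _ => rfl)] at *
        exact list_smul_prod _ _]
      rw [map_smul, tprod_cons_smul]
      rfl
  -- shape Ph Qh = shape M' W'
  have hD2 : shape n f₁ Ph Qh = shape n f₁ M' W' := by
    calc shape n f₁ Ph Qh
        = shape n f₁ (fun i => Sum.elim (Ph i) (0 : ι → H)) (fun i => Sum.elim (Qh i) 0) :=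
          (shape_pad f₁ Ph Qh).symm
      _ = shape n f₁ (fun i => Sum.elim (0 : ι × ι → H) (M' i))
            (fun i => Sum.elim 0 (W' i)) := by
          refine shape_rep f₁ _ _ _ _ (fun i => ?_)
          rw [Fintype.sum_sum_type, Fintype.sum_sum_type]
          simp only [Sum.elim_inl, Sum.elim_inr, TensorProduct.zero_tmul,
            TensorProduct.tmul_zero, Finset.sum_const_zero, add_zero, zero_add,
            Pi.zero_apply]
          exact hzi i
      _ = shape n f₁ M' W' := shape_pad_right f₁ M' W'
  -- LHS pointwise conversion
  have hLHS : ∀ J : Fin n → ι,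
      (tprod k (fun j : Fin (n + 1) =>
        st (S ((Fin.cons (σ * S ((List.ofFn fun i => u i (J i)).prod))
          (fun i => v i (J i)) : Fin (n + 1) → H) (-j)))))
      = tprod k (Fin.cons (σ * (List.ofFn fun i => st (u i (J i))).prod)
          (fun i => Sinv (st (v (Fin.rev i) (J (Fin.rev i))))) : Fin (n + 1) → H) := by
    intro J
    congr 1
    funext j
    refine Fin.cases ?_ (fun i => ?_) j
    · rw [neg_zero, Fin.cons_zero, Fin.cons_zero, hstHead]
      congr 1
      rw [list_prod_st st hst_mul hst_one, List.map_ofFn]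
      rfl
    · rw [fin_neg_succ, Fin.cons_succ, Fin.cons_succ, hstS]
  -- LHS = shape M' W'
  have hLfin : (∑ J : Fin n → ι,
      tprod k (Fin.cons (σ * (List.ofFn fun i => st (u i (J i))).prod)
        (fun i => Sinv (st (v (Fin.rev i) (J (Fin.rev i))))) : Fin (n + 1) → H))
      = shape n f₁ M' W' := by
    unfold shape
    refine Fintype.sum_bijective (fun J : Fin n → ι => J ∘ Fin.rev)
      (Function.Involutive.bijective (fun J => by funext i; simp [Fin.rev_rev]))
      _ _ (fun J => ?_)
    have htail : (fun i : Fin n => Sinv (st (v (Fin.rev i) (J (Fin.rev i)))))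
        = fun i => W' i ((J ∘ Fin.rev) i) := by
      funext i
      rfl
    have hhead : σ * (List.ofFn fun i => st (u i (J i))).prod
        = f₁ ((List.ofFn fun i => M' i ((J ∘ Fin.rev) i)).prod) := by
      rw [hf₁app]
      congr 1
      have hl1 : (List.ofFn fun i => M' i ((J ∘ Fin.rev) i))
          = ((List.ofFn fun i => st (u i (J i))).map Sinv).reverse := by
        rw [List.map_ofFn, ← ofFn_rev]
        rfl
      rw [hl1, list_S_rev S Sinv hSanti hSSinv hS1]
    rw [htail, hhead]
  -- finish
  calc (∑ J : Fin n → ι,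
      tprod k (fun j : Fin (n + 1) =>
        st (S ((Fin.cons (σ * S ((List.ofFn fun i => u i (J i)).prod))
          (fun i => v i (J i)) : Fin (n + 1) → H) (-j)))))
      = ∑ J : Fin n → ι,
        tprod k (Fin.cons (σ * (List.ofFn fun i => st (u i (J i))).prod)
          (fun i => Sinv (st (v (Fin.rev i) (J (Fin.rev i))))) : Fin (n + 1) → H) :=
        Finset.sum_congr rfl (fun J _ => hLHS J)
    _ = shape n f₁ M' W' := hLfin
    _ = shape n f₁ Ph Qh := hD2.symm
    _ = _ := hRHS.symm
end
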